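/- arXiv:2010.01420 — 4 statements merged into one kernel-verified Lean document; each statement's English description precedes it below -/
import Mathlib

section
/- Let M be a set of m ≥ 2 items and N a finite ordered set of bidders with valuations; fix a bidder i whose valuation v_i is subadditive, a set S_i* ⊆ M, and ψ > 0 with ψ ≥ v_i(S_i*), and assume that bidder i satisfies the α-price guarantee on S_i* for some real α ≥ 1. Then for every fixed assignment r_{−i} of rounds in {1, …, β+1} to the bidders other than i, in BinarySearchMechanism(N, M, ψ): E_{r*, r_i}[Utility_i + Rev(S_i*) | r_{−i}] ≥ (1/(2·α·(β+1)²))·v_i(S_i*) − ψ/m², where Utility_i and Rev refer to the FixedPriceAuction that produced the final allocation (with Utility_i = 0 if bidder i does not participate in it). -/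
open Finset

variable {ι : Type} [Fintype ι] [DecidableEq ι] {B : Type} [DecidableEq B]

/-- Sum of the prices of the items in `S`. -/
def priceOf (p : ι → ℝ) (S : Finset ι) : ℝ := ∑ e ∈ S, p e

/-- A (normalized, monotone) valuation. -/
def IsValuation (v : Finset ι → ℝ) : Prop :=
  v ∅ = 0 ∧ ∀ S T : Finset ι, S ⊆ T → v S ≤ v T

/-- A subadditive set function. -/
def SubadditiveVal (v : Finset ι → ℝ) : Prop :=
  ∀ S T : Finset ι, v (S ∪ T) ≤ v S + v T

/-- `D` is a demand oracle for valuation `v` at prices `p`: on any set `R` of available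
items it returns a subset of `R` maximizing utility. -/
def IsDemandOracle (v : Finset ι → ℝ) (p : ι → ℝ) (D : Finset ι → Finset ι) : Prop :=
  ∀ R : Finset ι, D R ⊆ R ∧ ∀ T ⊆ R, v T - priceOf p T ≤ v (D R) - priceOf p (D R)

/-- The bundle received by bidder `i` in the fixed price auction processing the ordered
list `L` of bidders with available items `R`, where bidder `j` uses demand oracle `Dem j`. -/
def FPAalloc (Dem : B → Finset ι → Finset ι) : List B → Finset ι → B → Finset ι
  | [], _, _ => ∅
  | j :: L, R, i => if i = j then Dem j R else FPAalloc Dem L (R \ Dem j R) i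

/-- The set of items allocated (to some bidder) in the fixed price auction. -/
def FPAsold (Dem : B → Finset ι → Finset ι) : List B → Finset ι → Finset ι
  | [], _ => ∅
  | j :: L, R => Dem j R ∪ FPAsold Dem L (R \ Dem j R)

/-- The candidate price set `B = {0} ∪ {2^(j-K)·ψ : j = 0,…,K-1}` where `K = 3⌈log₂ m⌉`. -/
def candB (m : ℕ) (ψ : ℝ) : Set ℝ :=
  insert 0 {x : ℝ | ∃ j < 3 * Nat.clog 2 m, x = 2 ^ j * ψ / 2 ^ (3 * Nat.clog 2 m)}

/-- Bidder with valuation `v` satisfies the `α`-price guarantee on `U`. -/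
def PriceGuarantee (v : Finset ι → ℝ) (U : Finset ι) (α : ℝ) : Prop :=
  ∃ (lam : Finset ι → ℝ) (q : ι → ℝ),
    (∀ S, 0 ≤ lam S) ∧ (∑ S ∈ U.powerset, lam S = 1) ∧ (∀ e ∈ U, 0 ≤ q e) ∧
    ∀ T ⊆ U, (1 / α) * v U - priceOf q T ≤
      ∑ S ∈ U.powerset, lam S * (v (S \ T) - priceOf q S)

/-- The group of bidders participating in round `ℓ` (in the order of `N`). -/
def BSMgroup (N : List B) (r : B → ℕ) (ℓ : ℕ) : List B := N.filter fun i => r i = ℓ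

/-- The offset (into the sorted vector `b` of `2^β` candidate prices) of the block of
remaining candidate prices of each item at the beginning of round `ℓ` (rounds are
`0`-indexed: the binary search rounds are `0,…,β-1` and the final round is `β`). -/
def BSMoff (Dem : B → (ι → ℝ) → Finset ι → Finset ι) (N : List B) (r : B → ℕ)
    (b : ℕ → ℝ) (β : ℕ) : ℕ → ι → ℕ
  | 0, _ => 0
  | ℓ + 1, e =>
    if e ∈ FPAsold
        (fun i => Dem i fun e' => b (BSMoff Dem N r b β ℓ e' + 2 ^ (β - ℓ - 1)))
        (BSMgroup N r ℓ) Finset.univ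
    then BSMoff Dem N r b β ℓ e + 2 ^ (β - ℓ - 1)
    else BSMoff Dem N r b β ℓ e

/-- The price vector used in round `ℓ` of the binary search mechanism: for `ℓ < β` the
middle entry of the remaining block of candidate prices, and for the final round `β`
the unique remaining candidate price. -/
def BSMprice (Dem : B → (ι → ℝ) → Finset ι → Finset ι) (N : List B) (r : B → ℕ)
    (b : ℕ → ℝ) (β ℓ : ℕ) : ι → ℝ :=
  fun e =>
    if ℓ < β then b (BSMoff Dem N r b β ℓ e + 2 ^ (β - ℓ - 1))
    else b (BSMoff Dem N r b β β e)

/-- The bundle received by bidder `i` in the final allocation of the binary search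
mechanism when the final allocation round is `ℓstar`. -/
def BSMfinalAlloc (Dem : B → (ι → ℝ) → Finset ι → Finset ι) (N : List B) (r : B → ℕ)
    (b : ℕ → ℝ) (β ℓstar : ℕ) (i : B) : Finset ι :=
  FPAalloc (fun j => Dem j (BSMprice Dem N r b β ℓstar)) (BSMgroup N r ℓstar) Finset.univ i

/-- The welfare of the final allocation of the binary search mechanism. -/
def BSMwelfare (v : B → Finset ι → ℝ) (Dem : B → (ι → ℝ) → Finset ι → Finset ι)
    (N : List B) (r : B → ℕ) (b : ℕ → ℝ) (β ℓstar : ℕ) : ℝ :=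
  ((BSMgroup N r ℓstar).map fun i => v i (BSMfinalAlloc Dem N r b β ℓstar i)).sum

/-- The set of items sold in the fixed price auction of round `ℓ`. -/
def BSMsold (Dem : B → (ι → ℝ) → Finset ι → Finset ι) (N : List B) (r : B → ℕ)
    (b : ℕ → ℝ) (β ℓ : ℕ) : Finset ι :=
  FPAsold (fun j => Dem j (BSMprice Dem N r b β ℓ)) (BSMgroup N r ℓ) Finset.univ

/-- The revenue obtained from the items of `S` in the final allocation (round `ℓstar`). -/
def BSMrev (Dem : B → (ι → ℝ) → Finset ι → Finset ι) (N : List B) (r : B → ℕ)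
    (b : ℕ → ℝ) (β : ℕ) (S : Finset ι) (ℓstar : ℕ) : ℝ :=
  priceOf (BSMprice Dem N r b β ℓstar) (S ∩ BSMsold Dem N r b β ℓstar)

/-- The utility of bidder `i` in the final allocation (zero if `i` does not take part in
the fixed price auction that produced the final allocation). -/
def BSMutility (v : B → Finset ι → ℝ) (Dem : B → (ι → ℝ) → Finset ι → Finset ι)
    (N : List B) (r : B → ℕ) (b : ℕ → ℝ) (β : ℕ) (i : B) (ℓstar : ℕ) : ℝ :=
  if r i = ℓstar then
    v i (BSMfinalAlloc Dem N r b β ℓstar i)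
      - priceOf (BSMprice Dem N r b β ℓstar) (BSMfinalAlloc Dem N r b β ℓstar i)
  else 0

set_option linter.unusedSectionVars false

/-- Remaining items after the fixed price auction processes `L` starting from `R`. -/
def Ravail (Dem : B → Finset ι → Finset ι) : List B → Finset ι → Finset ι
  | [], R => R
  | j :: L, R => Ravail Dem L (R \ Dem j R)

lemma Ravail_eq (Dem : B → Finset ι → Finset ι) :
    ∀ (L : List B) (R : Finset ι), Ravail Dem L R = R \ FPAsold Dem L R
  | [], R => by simp [Ravail, FPAsold]
  | j :: L, R => by
    rw [Ravail, Ravail_eq Dem L, FPAsold]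
    ext x; simp; tauto

lemma FPAsold_append (Dem : B → Finset ι → Finset ι) :
    ∀ (L₁ L₂ : List B) (R : Finset ι),
      FPAsold Dem (L₁ ++ L₂) R = FPAsold Dem L₁ R ∪ FPAsold Dem L₂ (Ravail Dem L₁ R)
  | [], L₂, R => by simp [FPAsold, Ravail]
  | j :: L₁, L₂, R => by
    simp only [List.cons_append, FPAsold, Ravail, List.append_eq, FPAsold_append Dem L₁ L₂, union_assoc]

lemma FPAalloc_middle (Dem : B → Finset ι → Finset ι) (i : B) :
    ∀ (L₁ : List B) (L₂ : List B) (R : Finset ι), i ∉ L₁ →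
      FPAalloc Dem (L₁ ++ i :: L₂) R i = Dem i (Ravail Dem L₁ R)
  | [], L₂, R, _ => by simp [FPAalloc, Ravail]
  | j :: L₁, L₂, R, h => by
    have hij : i ≠ j := fun hh => h (hh ▸ List.mem_cons_self)
    simp only [List.cons_append, FPAalloc, if_neg hij, Ravail]
    exact FPAalloc_middle Dem i L₁ L₂ _ (fun hh => h (List.mem_cons_of_mem _ hh))
lemma BSMgroup_congr {N : List B} {r r' : B → ℕ} {ℓ : ℕ}
    (h : ∀ j ∈ N, (r j = ℓ) ↔ (r' j = ℓ)) : BSMgroup N r ℓ = BSMgroup N r' ℓ := by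
  unfold BSMgroup
  exact List.filter_congr fun j hj => decide_eq_decide.mpr (h j hj)

lemma BSMoff_congr (Dem : B → (ι → ℝ) → Finset ι → Finset ι) (N : List B)
    (b : ℕ → ℝ) (β : ℕ) (r r' : B → ℕ) :
    ∀ ℓ, (∀ ℓ' < ℓ, BSMgroup N r ℓ' = BSMgroup N r' ℓ') →
      ∀ e, BSMoff Dem N r b β ℓ e = BSMoff Dem N r' b β ℓ e
  | 0, _, e => rfl
  | ℓ + 1, h, e => by
    have ih := BSMoff_congr Dem N b β r r' ℓ
      (fun ℓ' hℓ' => h ℓ' (hℓ'.trans (Nat.lt_succ_self ℓ)))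
    have hf : (fun e' => b (BSMoff Dem N r b β ℓ e' + 2 ^ (β - ℓ - 1)))
        = fun e' => b (BSMoff Dem N r' b β ℓ e' + 2 ^ (β - ℓ - 1)) := by
      funext e'; rw [ih]
    simp only [BSMoff, hf, h ℓ (Nat.lt_succ_self ℓ), ih]

lemma BSMoff_le (Dem : B → (ι → ℝ) → Finset ι → Finset ι) (N : List B)
    (b : ℕ → ℝ) (β : ℕ) (r : B → ℕ) :
    ∀ ℓ, ℓ ≤ β → ∀ e, BSMoff Dem N r b β ℓ e + 2 ^ (β - ℓ) ≤ 2 ^ β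
  | 0, _, e => by simp [BSMoff]
  | ℓ + 1, h, e => by
    have ih := BSMoff_le Dem N b β r ℓ (Nat.le_of_succ_le h) e
    have e1 : β - ℓ - 1 = β - (ℓ + 1) := Nat.sub_sub β ℓ 1
    have e2 : 2 ^ (β - ℓ) = 2 ^ (β - ℓ - 1) * 2 := by
      rw [← pow_succ]
      congr 1
      omega
    rw [← e1]
    simp only [BSMoff]
    split <;> omega

lemma BSMprice_congr (Dem : B → (ι → ℝ) → Finset ι → Finset ι) (N : List B)
    (b : ℕ → ℝ) (β : ℕ) (r r' : B → ℕ) (ℓ : ℕ) (hℓ : ℓ ≤ β)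
    (h : ∀ ℓ' < ℓ, BSMgroup N r ℓ' = BSMgroup N r' ℓ') :
    BSMprice Dem N r b β ℓ = BSMprice Dem N r' b β ℓ := by
  funext e; unfold BSMprice
  by_cases hc : ℓ < β
  · rw [if_pos hc, if_pos hc, BSMoff_congr Dem N b β r r' ℓ h e]
  · have hβℓ : β = ℓ := (le_antisymm hℓ (not_lt.1 hc)).symm
    subst hβℓ
    rw [if_neg hc, if_neg hc, BSMoff_congr Dem N b β r r' β h e]

lemma BSMsold_congr (Dem : B → (ι → ℝ) → Finset ι → Finset ι) (N : List B)
    (b : ℕ → ℝ) (β : ℕ) (r r' : B → ℕ) (ℓ : ℕ) (hℓ : ℓ ≤ β)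
    (h : ∀ ℓ' ≤ ℓ, BSMgroup N r ℓ' = BSMgroup N r' ℓ') :
    BSMsold Dem N r b β ℓ = BSMsold Dem N r' b β ℓ := by
  unfold BSMsold
  rw [BSMprice_congr Dem N b β r r' ℓ hℓ (fun ℓ' h' => h ℓ' h'.le), h ℓ le_rfl]

lemma BSMoff_succ_eq (Dem : B → (ι → ℝ) → Finset ι → Finset ι) (N : List B)
    (b : ℕ → ℝ) (β : ℕ) (r : B → ℕ) (ℓ : ℕ) (hℓ : ℓ < β) (e : ι) :
    BSMoff Dem N r b β (ℓ + 1) e =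
      if e ∈ BSMsold Dem N r b β ℓ then BSMoff Dem N r b β ℓ e + 2 ^ (β - ℓ - 1)
      else BSMoff Dem N r b β ℓ e := by
  have hp : (fun e' => b (BSMoff Dem N r b β ℓ e' + 2 ^ (β - ℓ - 1)))
      = BSMprice Dem N r b β ℓ := by
    funext e'; unfold BSMprice; rw [if_pos hℓ]
  simp only [BSMoff, BSMsold, hp]
  rfl
lemma BSM_trichotomy_aux (Dem : B → (ι → ℝ) → Finset ι → Finset ι) (N : List B)
    (b : ℕ → ℝ) (β : ℕ) (r : B → ℕ)
    (hbmono : ∀ j k : ℕ, j < k → k < 2 ^ β → b j < b k)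
    (e : ι) (j : ℕ) (hj : j < 2 ^ β) :
    ∀ d ℓ, ℓ + d = β → BSMoff Dem N r b β ℓ e ≤ j →
      j < BSMoff Dem N r b β ℓ e + 2 ^ (β - ℓ) →
      (∃ ℓ' < β,
          (BSMprice Dem N r b β ℓ' e ≤ b j ∧ e ∉ BSMsold Dem N r b β ℓ') ∨
          (b j ≤ BSMprice Dem N r b β ℓ' e ∧ e ∈ BSMsold Dem N r b β ℓ')) ∨
        BSMoff Dem N r b β β e = j
  | 0, ℓ, hd, h1, h2 => by
    have hβℓ : ℓ = β := by omega
    subst hβℓ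
    right
    simp only [Nat.sub_self, pow_zero] at h2
    omega
  | d + 1, ℓ, hd, h1, h2 => by
    have hℓβ : ℓ < β := by omega
    have hoffle := BSMoff_le Dem N b β r ℓ hℓβ.le e
    have hsplit : 2 ^ (β - ℓ) = 2 ^ (β - ℓ - 1) * 2 := by
      have h1' : β - ℓ - 1 + 1 = β - ℓ := by omega
      have hps := pow_succ 2 (β - ℓ - 1)
      rw [h1'] at hps
      omega
    have hP : BSMoff Dem N r b β ℓ e + 2 ^ (β - ℓ - 1) < 2 ^ β := by omega
    have hprice : BSMprice Dem N r b β ℓ e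
        = b (BSMoff Dem N r b β ℓ e + 2 ^ (β - ℓ - 1)) := by
      unfold BSMprice; rw [if_pos hℓβ]
    have hsucc := BSMoff_succ_eq Dem N b β r ℓ hℓβ e
    have e1 : β - ℓ - 1 = β - (ℓ + 1) := Nat.sub_sub β ℓ 1
    by_cases hs : e ∈ BSMsold Dem N r b β ℓ
    · by_cases hq : b j ≤ b (BSMoff Dem N r b β ℓ e + 2 ^ (β - ℓ - 1))
      · exact Or.inl ⟨ℓ, hℓβ, Or.inr ⟨hprice ▸ hq, hs⟩⟩
      · have hPj : BSMoff Dem N r b β ℓ e + 2 ^ (β - ℓ - 1) < j := by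
          by_contra hcon
          push_neg at hcon
          rcases lt_or_eq_of_le hcon with hlt | heq
          · exact hq (le_of_lt (hbmono _ _ hlt hP))
          · exact hq (le_of_eq (by rw [heq]))
        have hoff' : BSMoff Dem N r b β (ℓ + 1) e
            = BSMoff Dem N r b β ℓ e + 2 ^ (β - ℓ - 1) := by rw [hsucc, if_pos hs]
        exact BSM_trichotomy_aux Dem N b β r hbmono e j hj d (ℓ + 1) (by omega)
          (by rw [hoff']; omega) (by rw [hoff', ← e1]; omega)
    · by_cases hq : b (BSMoff Dem N r b β ℓ e + 2 ^ (β - ℓ - 1)) ≤ b j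
      · exact Or.inl ⟨ℓ, hℓβ, Or.inl ⟨hprice ▸ hq, hs⟩⟩
      · have hPj : j < BSMoff Dem N r b β ℓ e + 2 ^ (β - ℓ - 1) := by
          by_contra hcon
          push_neg at hcon
          rcases lt_or_eq_of_le hcon with hlt | heq
          · exact hq (le_of_lt (hbmono _ _ hlt hj))
          · exact hq (le_of_eq (by rw [heq]))
        have hoff' : BSMoff Dem N r b β (ℓ + 1) e = BSMoff Dem N r b β ℓ e := by
          rw [hsucc, if_neg hs]
        exact BSM_trichotomy_aux Dem N b β r hbmono e j hj d (ℓ + 1) (by omega)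
          (by rw [hoff']; omega) (by rw [hoff', ← e1]; omega)

lemma BSM_trichotomy (Dem : B → (ι → ℝ) → Finset ι → Finset ι) (N : List B)
    (b : ℕ → ℝ) (β : ℕ) (r : B → ℕ)
    (hbmono : ∀ j k : ℕ, j < k → k < 2 ^ β → b j < b k)
    (e : ι) (j : ℕ) (hj : j < 2 ^ β) :
    (∃ ℓ' < β,
        (BSMprice Dem N r b β ℓ' e ≤ b j ∧ e ∉ BSMsold Dem N r b β ℓ') ∨
        (b j ≤ BSMprice Dem N r b β ℓ' e ∧ e ∈ BSMsold Dem N r b β ℓ')) ∨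
      BSMoff Dem N r b β β e = j := by
  refine BSM_trichotomy_aux Dem N b β r hbmono e j hj β 0 (by omega) (by simp [BSMoff]) ?_
  simpa [BSMoff] using hj
/-- Round a price down into the candidate set. -/
noncomputable def roundDownB (K : ℕ) (ψ x : ℝ) : ℝ :=
  if x < ψ / 2 ^ K then 0
  else 2 ^ (min (K - 1) (Nat.log 2 ⌊x / (ψ / 2 ^ K)⌋₊)) * ψ / 2 ^ K

lemma roundDownB_props (K : ℕ) (ψ x : ℝ) (hψ : 0 < ψ) (hx : 0 ≤ x) (hK : 1 ≤ K) :
    (roundDownB K ψ x = 0 ∨ ∃ j < K, roundDownB K ψ x = 2 ^ j * ψ / 2 ^ K) ∧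
      0 ≤ roundDownB K ψ x ∧ roundDownB K ψ x ≤ x ∧
      (x ≤ ψ → x ≤ 2 * roundDownB K ψ x + ψ / 2 ^ K) ∧
      (ψ < x → roundDownB K ψ x = 2 ^ (K - 1) * ψ / 2 ^ K) := by
  have hpow : (0:ℝ) < 2 ^ K := by positivity
  have h1K : (1:ℝ) ≤ 2 ^ K := by exact_mod_cast Nat.one_le_two_pow
  have hu : (0:ℝ) < ψ / 2 ^ K := by positivity
  have huψ : ψ / 2 ^ K ≤ ψ := by
    rw [div_le_iff₀ hpow]
    nlinarith
  unfold roundDownB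
  by_cases hc : x < ψ / 2 ^ K
  · rw [if_pos hc]
    refine ⟨Or.inl rfl, le_refl 0, hx, fun _ => by linarith, fun hcon => absurd hcon ?_⟩
    push_neg
    linarith
  · rw [if_neg hc]
    push_neg at hc
    set t := ⌊x / (ψ / 2 ^ K)⌋₊ with ht
    have ht1 : 1 ≤ t := Nat.le_floor (by rw [Nat.cast_one, le_div_iff₀ hu]; linarith)
    set j := min (K - 1) (Nat.log 2 t) with hj
    have hjK : j < K := by omega
    have hfl : (t : ℝ) ≤ x / (ψ / 2 ^ K) := Nat.floor_le (by positivity)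
    have hfl2 : x / (ψ / 2 ^ K) < (t : ℝ) + 1 := Nat.lt_floor_add_one _
    have h2j : (2:ℝ) ^ j ≤ t := by
      have h1 : 2 ^ j ≤ 2 ^ (Nat.log 2 t) := Nat.pow_le_pow_right (by norm_num) (by omega)
      have h2 : 2 ^ (Nat.log 2 t) ≤ t := Nat.pow_log_le_self 2 (by omega)
      exact_mod_cast h1.trans h2
    have hmul : ((t:ℝ)) * (ψ / 2 ^ K) ≤ x := by
      rw [← le_div_iff₀ hu]; exact hfl
    have hle : 2 ^ j * ψ / 2 ^ K ≤ x := by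
      have hmm : (2:ℝ) ^ j * (ψ / 2 ^ K) ≤ (t:ℝ) * (ψ / 2 ^ K) :=
        mul_le_mul_of_nonneg_right h2j hu.le
      calc 2 ^ j * ψ / 2 ^ K = 2 ^ j * (ψ / 2 ^ K) := by ring
        _ ≤ (t:ℝ) * (ψ / 2 ^ K) := hmm
        _ ≤ x := hmul
    refine ⟨Or.inr ⟨j, hjK, rfl⟩, by positivity, hle, ?_, ?_⟩
    · intro hxψ
      by_cases hcase : Nat.log 2 t ≤ K - 1
      · have hjlog : j = Nat.log 2 t := by omega
        have htlt : t < 2 ^ (Nat.log 2 t + 1) := Nat.lt_pow_succ_log_self (by norm_num) t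
        have hxlt : x < 2 ^ (j + 1) * (ψ / 2 ^ K) := by
          rw [← div_lt_iff₀ hu]
          rw [hjlog]
          calc x / (ψ / 2 ^ K) < (t : ℝ) + 1 := hfl2
            _ ≤ ((2 ^ (Nat.log 2 t + 1) : ℕ) : ℝ) := by exact_mod_cast htlt
            _ = 2 ^ (Nat.log 2 t + 1) := by push_cast; ring
        have hexp : (2:ℝ) ^ (j + 1) * (ψ / 2 ^ K) = 2 * (2 ^ j * ψ / 2 ^ K) := by
          rw [pow_succ]; ring
        rw [hexp] at hxlt
        linarith
      · have hjeq : j = K - 1 := by omega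
        rw [hjeq]
        have h2K : (2:ℝ) ^ K = 2 ^ (K - 1) * 2 := by
          rw [← pow_succ]
          congr 1
          omega
        have heq : 2 * (2 ^ (K-1) * ψ / 2 ^ K) = ψ := by
          rw [h2K]
          have : (0:ℝ) < 2 ^ (K-1) := by positivity
          field_simp
        rw [heq]  -- goal: x ≤ ψ + ψ/2^K
        linarith
    · intro hψx
      have htK : 2 ^ K ≤ t := by
        rw [ht]
        refine Nat.le_floor ?_
        push_cast
        rw [le_div_iff₀ hu]
        calc ((2:ℝ) ^ K) * (ψ / 2 ^ K) = ψ := by field_simp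
          _ ≤ x := hψx.le
      have hlog : K ≤ Nat.log 2 t := by
        calc K = Nat.log 2 (2 ^ K) := (Nat.log_pow (by norm_num) K).symm
          _ ≤ Nat.log 2 t := Nat.log_mono_right htK
      have hjj : j = K - 1 := by omega
      rw [hjj]
lemma subadd_biUnion (v : Finset ι → ℝ) (h0 : v ∅ = 0) (hsub : SubadditiveVal v)
    (f : ℕ → Finset ι) :
    ∀ k, v ((Finset.range k).biUnion f) ≤ ∑ ℓ ∈ Finset.range k, v (f ℓ)
  | 0 => by simp [h0]
  | k + 1 => by
    rw [Finset.range_add_one, Finset.biUnion_insert,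
      Finset.sum_insert Finset.notMem_range_self]
    have h1 := hsub (f k) ((Finset.range k).biUnion f)
    have h2 := subadd_biUnion v h0 hsub f k
    linarith
set_option maxHeartbeats 2000000

/-- **Proposition 4.1** (per-bidder guarantee in `BinarySearchMechanism(N, M, ψ)`).
Items are the elements of the finite type `ι` (`M = univ`, `m = card ι ≥ 2`); bidders are
`0, …, n-1` in this order with (normalized, monotone) valuations `v i` and demand oracles
`Dem i p`; `b 0 < ⋯ < b (2^β - 1)` is the enlarged candidate price set `B' ⊇ B`.  Fix a
bidder `i₀` with subadditive valuation, a set `Sstar ⊆ M`, and `ψ > 0` with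
`ψ ≥ v_{i₀}(Sstar)`, and assume `i₀` satisfies the `α`-price guarantee on `Sstar`.  For
every fixed assignment `rminus` of rounds to the other bidders, the conditional
expectation over `r_{i₀}` and `r*` of `Utility_{i₀} + Rev(Sstar)` in the fixed price
auction producing the final allocation is at least
`(1/(2·α·(β+1)²))·v_{i₀}(Sstar) − ψ/m²`. -/
theorem binarySearchMechanism_utility_plus_revenue
    {ι : Type} [Fintype ι] [DecidableEq ι] (n β : ℕ) (ψ α : ℝ)
    (v : Fin n → Finset ι → ℝ)
    (Dem : Fin n → (ι → ℝ) → Finset ι → Finset ι)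
    (b : ℕ → ℝ) (Sstar : Finset ι) (i₀ : Fin n) (rminus : Fin n → Fin (β + 1))
    (hm : 2 ≤ Fintype.card ι)
    (hval : ∀ i, IsValuation (v i))
    (hsub : SubadditiveVal (v i₀))
    (hψpos : 0 < ψ)
    (hψ : v i₀ Sstar ≤ ψ)
    (hα : 1 ≤ α)
    (hguar : PriceGuarantee (v i₀) Sstar α)
    (hβ : 1 ≤ β)
    (hbmono : ∀ j k : ℕ, j < k → k < 2 ^ β → b j < b k)
    (hbnn : ∀ j < 2 ^ β, 0 ≤ b j)
    (hbB : ∀ x ∈ candB (Fintype.card ι) ψ, ∃ j < 2 ^ β, b j = x)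
    (hDem : ∀ i p, IsDemandOracle (v i) p (Dem i p)) :
    (((β : ℝ) + 1) ^ 2)⁻¹ *
        ∑ ri : Fin (β + 1), ∑ rs : Fin (β + 1),
          (BSMutility v Dem (List.finRange n)
              (fun j => ((Function.update rminus i₀ ri) j : ℕ)) b β i₀ (rs : ℕ)
            + BSMrev Dem (List.finRange n)
                (fun j => ((Function.update rminus i₀ ri) j : ℕ)) b β Sstar (rs : ℕ))
      ≥ (1 / (2 * α * ((β : ℝ) + 1) ^ 2)) * v i₀ Sstar
          - ψ / (Fintype.card ι : ℝ) ^ 2 := by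
  classical
  obtain ⟨lam, q, hlam0, hlam1, hq0, hkey⟩ := hguar
  obtain ⟨h0, hmono⟩ := hval i₀
  set m := Fintype.card ι with hm'
  set K := 3 * Nat.clog 2 m with hK'
  set N := List.finRange n with hN
  have hK1 : 1 ≤ K := by
    have h1 : 0 < Nat.clog 2 m := Nat.clog_pos (by norm_num) (by omega)
    omega
  have hmK : m ^ 3 ≤ 2 ^ K := by
    have h1 : m ≤ 2 ^ Nat.clog 2 m := Nat.le_pow_clog (by norm_num) m
    calc m ^ 3 ≤ (2 ^ Nat.clog 2 m) ^ 3 := Nat.pow_le_pow_left h1 3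
      _ = 2 ^ K := by rw [← pow_mul, hK', Nat.mul_comm]
  -- the rounded prices
  set qbar : ι → ℝ := fun e => roundDownB K ψ (q e) with hqbar'
  have hprops : ∀ e ∈ Sstar,
      (qbar e = 0 ∨ ∃ j < K, qbar e = 2 ^ j * ψ / 2 ^ K) ∧
        0 ≤ qbar e ∧ qbar e ≤ q e ∧
        (q e ≤ ψ → q e ≤ 2 * qbar e + ψ / 2 ^ K) ∧
        (ψ < q e → qbar e = 2 ^ (K - 1) * ψ / 2 ^ K) :=
    fun e he => roundDownB_props K ψ (q e) hψpos (hq0 e he) hK1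
  have hmem : ∀ e ∈ Sstar, qbar e ∈ candB m ψ := by
    intro e he
    rcases (hprops e he).1 with h | ⟨j, hj, hh⟩
    · exact Set.mem_insert_iff.2 (Or.inl h)
    · exact Set.mem_insert_iff.2 (Or.inr ⟨j, by rw [← hK']; exact hj, by rw [← hK']; exact hh⟩)
  have hidx : ∀ e ∈ Sstar, ∃ jj, jj < 2 ^ β ∧ b jj = qbar e := by
    intro e he
    obtain ⟨jj, h1, h2⟩ := hbB (qbar e) (hmem e he)
    exact ⟨jj, h1, h2⟩
  choose! jdx hjdx hbjdx using hidx
  -- round assignments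
  set rup : ℕ → Fin n → ℕ := fun k jj => if jj = i₀ then k else (rminus jj : ℕ) with hrup'
  have hrup : ∀ ri : Fin (β + 1),
      (fun j => ((Function.update rminus i₀ ri) j : ℕ)) = rup (ri : ℕ) := by
    intro ri
    funext jj
    rw [Function.update_apply, hrup']
    by_cases h : jj = i₀ <;> simp [h]
  set free : Fin n → ℕ := rup (β + 1) with hfree'
  -- splitting of the bidder list around i₀
  obtain ⟨P, Q, hPQ⟩ : ∃ P Q, N = P ++ i₀ :: Q := List.append_of_mem (List.mem_finRange i₀)
  have hnodup : (P ++ i₀ :: Q).Nodup := by rw [← hPQ, hN]; exact List.nodup_finRange n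
  have hiP : i₀ ∉ P := by
    rcases List.nodup_append.1 hnodup with ⟨-, -, hdisj⟩
    intro hmem
    exact hdisj _ hmem _ List.mem_cons_self rfl
  -- group identities
  have hgroup_ne : ∀ k ℓ : ℕ, ℓ ≠ k → ℓ ≠ β + 1 →
      BSMgroup N (rup k) ℓ = BSMgroup N free ℓ := by
    intro k ℓ h1 h2
    refine BSMgroup_congr fun j _ => ?_
    show rup k j = ℓ ↔ rup (β + 1) j = ℓ
    rw [hrup']
    by_cases h : j = i₀
    · subst h
      simp only [if_pos rfl]
      constructor
      · intro hh; exact absurd hh.symm h1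
      · intro hh; exact absurd hh.symm h2
    · simp only [if_neg h]
  have hiQ : i₀ ∉ Q := by
    rcases List.nodup_append.1 hnodup with ⟨-, hq, -⟩
    exact (List.nodup_cons.1 hq).1
  have hfilterP : ∀ (k k' : ℕ), (P.filter fun jj => rup k' jj = k)
      = (P.filter fun jj => free jj = k) := by
    intro k k'
    refine List.filter_congr fun j hj => ?_
    have hji : j ≠ i₀ := fun hh => hiP (hh ▸ hj)
    show decide (rup k' j = k) = decide (rup (β + 1) j = k)
    rw [hrup']
    simp only [if_neg hji]
  have hfilterQ : ∀ (k k' : ℕ), (Q.filter fun jj => rup k' jj = k)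
      = (Q.filter fun jj => free jj = k) := by
    intro k k'
    refine List.filter_congr fun j hj => ?_
    have hji : j ≠ i₀ := fun hh => hiQ (hh ▸ hj)
    show decide (rup k' j = k) = decide (rup (β + 1) j = k)
    rw [hrup']
    simp only [if_neg hji]
  have hgroup_split : ∀ k : ℕ,
      BSMgroup N (rup k) k
        = (P.filter fun jj => free jj = k) ++ i₀ :: (Q.filter fun jj => free jj = k) := by
    intro k
    unfold BSMgroup
    rw [hPQ, List.filter_append, List.filter_cons]
    have hpi : rup k i₀ = k := by rw [hrup']; simp
    rw [if_pos (by simpa using hpi)]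
    rw [hfilterP k k, hfilterQ k k]
  have hgroup_free : ∀ ℓ : ℕ, ℓ ≤ β →
      BSMgroup N free ℓ
        = (P.filter fun jj => free jj = ℓ) ++ (Q.filter fun jj => free jj = ℓ) := by
    intro ℓ hℓ
    unfold BSMgroup
    rw [hPQ, List.filter_append, List.filter_cons]
    have hpi : ¬(free i₀ = ℓ) := by rw [hfree', hrup']; simp; omega
    rw [if_neg (by simpa using hpi)]
  -- price/sold equalities between processes
  have hoffeq : ∀ k ℓ : ℕ, ℓ ≤ k → k ≤ β → ∀ e,
      BSMoff Dem N (rup k) b β ℓ e = BSMoff Dem N free b β ℓ e := by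
    intro k ℓ h1 h2 e
    exact BSMoff_congr Dem N b β _ _ ℓ
      (fun ℓ' hℓ' => hgroup_ne k ℓ' (by omega) (by omega)) e
  have hpriceeq : ∀ k ℓ : ℕ, ℓ ≤ k → k ≤ β →
      BSMprice Dem N (rup k) b β ℓ = BSMprice Dem N free b β ℓ := by
    intro k ℓ h1 h2
    exact BSMprice_congr Dem N b β _ _ ℓ (h1.trans h2)
      (fun ℓ' hℓ' => hgroup_ne k ℓ' (by omega) (by omega))
  have hsoldeq : ∀ k ℓ : ℕ, ℓ < k → k ≤ β →
      BSMsold Dem N (rup k) b β ℓ = BSMsold Dem N free b β ℓ := by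
    intro k ℓ h1 h2
    exact BSMsold_congr Dem N b β _ _ ℓ (by omega)
      (fun ℓ' hℓ' => hgroup_ne k ℓ' (by omega) (by omega))
  
  -- nonnegativity of prices
  have hpnn : ∀ (r : Fin n → ℕ) (ℓ : ℕ), ℓ ≤ β → ∀ e, 0 ≤ BSMprice Dem N r b β ℓ e := by
    intro r ℓ hℓ e
    unfold BSMprice
    by_cases hc : ℓ < β
    · rw [if_pos hc]
      refine hbnn _ ?_
      have h1 := BSMoff_le Dem N b β r ℓ hℓ e
      have h2 : 2 ^ (β - ℓ - 1) < 2 ^ (β - ℓ) :=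
        Nat.pow_lt_pow_right (by norm_num) (by omega)
      omega
    · rw [if_neg hc]
      refine hbnn _ ?_
      have h1 := BSMoff_le Dem N b β r β le_rfl e
      simp only [Nat.sub_self, pow_zero] at h1
      omega
  have hrev_nn : ∀ (r : Fin n → ℕ) (ℓ : ℕ), ℓ ≤ β → 0 ≤ BSMrev Dem N r b β Sstar ℓ := by
    intro r ℓ hℓ
    unfold BSMrev priceOf
    exact Finset.sum_nonneg fun e _ => hpnn r ℓ hℓ e
  -- items sold before bidder i₀'s turn in the round-ℓ auction (free process)
  set soldB : ℕ → Finset ι := fun ℓ => FPAsold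
      (fun jj => Dem jj (BSMprice Dem N free b β ℓ))
      (P.filter fun jj => free jj = ℓ) Finset.univ with hsoldB'
  have hsoldB_sub : ∀ ℓ : ℕ, ℓ ≤ β → soldB ℓ ⊆ BSMsold Dem N free b β ℓ := by
    intro ℓ hℓ
    unfold BSMsold
    rw [hgroup_free ℓ hℓ, FPAsold_append]
    exact Finset.subset_union_left
  -- the allocation received by i₀ in the diagonal case
  have hallocdiag : ∀ ℓ : ℕ, ℓ ≤ β →
      BSMfinalAlloc Dem N (rup ℓ) b β ℓ i₀
        = Dem i₀ (BSMprice Dem N free b β ℓ) (Finset.univ \ soldB ℓ) := by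
    intro ℓ hℓ
    unfold BSMfinalAlloc
    rw [hpriceeq ℓ ℓ le_rfl hℓ, hgroup_split ℓ]
    rw [FPAalloc_middle _ _ _ _ _ (fun hmem2 => hiP (List.mem_of_mem_filter hmem2))]
    rw [Ravail_eq]
  -- utility lower bound at diagonal pairs
  have hutil_ge : ∀ ℓ : ℕ, ℓ ≤ β → ∀ X : Finset ι, X ⊆ Finset.univ \ soldB ℓ →
      (∀ e ∈ X, BSMprice Dem N free b β ℓ e ≤ qbar e) →
      v i₀ X - ∑ e ∈ X, qbar e ≤ BSMutility v Dem N (rup ℓ) b β i₀ ℓ := by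
    intro ℓ hℓ X hX hqX
    unfold BSMutility
    have hri : rup ℓ i₀ = ℓ := by rw [hrup']; simp
    rw [if_pos hri, hpriceeq ℓ ℓ le_rfl hℓ, hallocdiag ℓ hℓ]
    have hor := (hDem i₀ (BSMprice Dem N free b β ℓ) (Finset.univ \ soldB ℓ)).2 X hX
    have h2 : priceOf (BSMprice Dem N free b β ℓ) X ≤ ∑ e ∈ X, qbar e := by
      unfold priceOf
      exact Finset.sum_le_sum hqX
    linarith
  -- utility is always nonnegative
  have hutil_nn : ∀ (ri : Fin (β + 1)) (rs : ℕ), rs ≤ β →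
      0 ≤ BSMutility v Dem N (rup (ri : ℕ)) b β i₀ rs := by
    intro ri rs hrs
    unfold BSMutility
    by_cases hri : rup (ri : ℕ) i₀ = rs
    · rw [if_pos hri]
      have hri2 : (ri : ℕ) = rs := by
        rw [hrup'] at hri
        simpa using hri
      subst hri2
      rw [hpriceeq _ _ le_rfl hrs, hallocdiag _ hrs]
      have hor := (hDem i₀ (BSMprice Dem N free b β (ri : ℕ))
        (Finset.univ \ soldB (ri : ℕ))).2 ∅ (Finset.empty_subset _)
      simpa [h0, priceOf] using hor
    · rw [if_neg hri]
  -- the good-round classification from the binary-search trichotomy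
  set GB : ι → ℕ → Prop := fun e ℓ =>
    BSMprice Dem N free b β ℓ e ≤ qbar e ∧ e ∉ soldB ℓ with hGB'
  set GR : ι → ℕ → Prop := fun e ℓ =>
    qbar e ≤ BSMprice Dem N free b β ℓ e ∧
      e ∈ (if ℓ < β then BSMsold Dem N free b β ℓ else soldB β) with hGR'
  have hGood : ∀ e ∈ Sstar, ∃ ℓ, ℓ ≤ β ∧ (GB e ℓ ∨ GR e ℓ) := by
    intro e he
    have hprice_lt : ∀ ℓ' < β, BSMprice Dem N free b β ℓ' e
        = b (BSMoff Dem N free b β ℓ' e + 2 ^ (β - ℓ' - 1)) := by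
      intro ℓ' hℓ'
      unfold BSMprice
      rw [if_pos hℓ']
    rcases BSM_trichotomy Dem N b β free hbmono e (jdx e) (hjdx e he) with
      ⟨ℓ', hℓ', hcase⟩ | hoff
    · rcases hcase with ⟨hp, hs⟩ | ⟨hp, hs⟩
      · refine ⟨ℓ', hℓ'.le, Or.inl ⟨by rwa [hbjdx e he] at hp,
          fun hmem2 => hs (hsoldB_sub ℓ' hℓ'.le hmem2)⟩⟩
      · refine ⟨ℓ', hℓ'.le, Or.inr ⟨by rwa [hbjdx e he] at hp, ?_⟩⟩
        rw [if_pos hℓ']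
        exact hs
    · have hpe : BSMprice Dem N free b β β e = qbar e := by
        unfold BSMprice
        rw [if_neg (lt_irrefl β), hoff, hbjdx e he]
      by_cases hsb : e ∈ soldB β
      · refine ⟨β, le_rfl, Or.inr ⟨hpe.ge, ?_⟩⟩
        rw [if_neg (lt_irrefl β)]
        exact hsb
      · exact ⟨β, le_rfl, Or.inl ⟨hpe.le, hsb⟩⟩
  choose! crit hcrit using hGood
  set Tstar := Sstar.filter (fun e => GR e (crit e)) with hTstar'
  have hTsub : Tstar ⊆ Sstar := Finset.filter_subset _ _
  have hGBmem : ∀ e ∈ Sstar, e ∉ Tstar → GB e (crit e) := by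
    intro e he hne
    rcases (hcrit e he).2 with h | h
    · exact h
    · exact absurd (Finset.mem_filter.2 ⟨he, h⟩) hne
  
  -- revenue lower bound per critical round, using ri = β
  have hrev_fiber : ∀ ℓ : ℕ, ℓ ≤ β →
      ∑ e ∈ Tstar.filter (fun e => crit e = ℓ), qbar e
        ≤ BSMrev Dem N (rup β) b β Sstar ℓ := by
    intro ℓ hℓ
    unfold BSMrev priceOf
    have hpeq := hpriceeq β ℓ hℓ le_rfl
    have hsub2 : Tstar.filter (fun e => crit e = ℓ)
        ⊆ Sstar ∩ BSMsold Dem N (rup β) b β ℓ := by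
      intro e hee
      rcases Finset.mem_filter.1 hee with ⟨heT, hce⟩
      rcases Finset.mem_filter.1 heT with ⟨heS, hgr⟩
      rw [hce] at hgr
      refine Finset.mem_inter.2 ⟨heS, ?_⟩
      by_cases hc : ℓ < β
      · rw [hsoldeq β ℓ hc le_rfl]
        have := hgr.2
        rwa [if_pos hc] at this
      · obtain rfl : ℓ = β := le_antisymm hℓ (not_lt.1 hc)
        have h1 : e ∈ soldB ℓ := by
          have := hgr.2
          rwa [if_neg hc] at this
        unfold BSMsold
        rw [hpriceeq ℓ ℓ le_rfl le_rfl, hgroup_split ℓ, FPAsold_append]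
        exact Finset.mem_union_left _ h1
    calc ∑ e ∈ Tstar.filter (fun e => crit e = ℓ), qbar e
        ≤ ∑ e ∈ Tstar.filter (fun e => crit e = ℓ), BSMprice Dem N (rup β) b β ℓ e := by
          refine Finset.sum_le_sum fun e hee => ?_
          rcases Finset.mem_filter.1 hee with ⟨heT, hce⟩
          rcases Finset.mem_filter.1 heT with ⟨heS, hgr⟩
          rw [hce] at hgr
          rw [hpeq]
          exact hgr.1
      _ ≤ ∑ e ∈ Sstar ∩ BSMsold Dem N (rup β) b β ℓ, BSMprice Dem N (rup β) b β ℓ e :=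
          Finset.sum_le_sum_of_subset_of_nonneg hsub2 fun e _ _ => hpnn _ ℓ hℓ e
  -- total revenue bound
  have hcrit_le : ∀ e ∈ Tstar, crit e ∈ Finset.range (β + 1) := by
    intro e he
    exact Finset.mem_range.2 (by have := (hcrit e (hTsub he)).1; omega)
  have hrev_tot : (∑ e ∈ Tstar, qbar e)
      ≤ ∑ rs : Fin (β + 1), BSMrev Dem N (rup β) b β Sstar (rs : ℕ) := by
    rw [← Finset.sum_fiberwise_of_maps_to hcrit_le qbar]
    rw [Fin.sum_univ_eq_sum_range (fun ℓ => BSMrev Dem N (rup β) b β Sstar ℓ) (β + 1)]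
    refine Finset.sum_le_sum fun ℓ hℓ => hrev_fiber ℓ ?_
    have := Finset.mem_range.1 hℓ
    omega
  -- the parts of S \ Tstar bought in each diagonal round
  set Xf : Finset ι → ℕ → Finset ι :=
    fun S ℓ => (S \ Tstar).filter fun e => crit e = ℓ with hXf'
  have hdiag : ∀ ℓ : ℕ, ℓ ≤ β → ∀ S ∈ Sstar.powerset,
      v i₀ (Xf S ℓ) - ∑ e ∈ Xf S ℓ, qbar e
        ≤ BSMutility v Dem N (rup ℓ) b β i₀ ℓ := by
    intro ℓ hℓ S hS
    have hmemX : ∀ e ∈ Xf S ℓ, GB e ℓ := by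
      intro e hee
      rcases Finset.mem_filter.1 hee with ⟨hesd, hce⟩
      rcases Finset.mem_sdiff.1 hesd with ⟨heS, heT⟩
      have heS' : e ∈ Sstar := Finset.mem_powerset.1 hS heS
      have hgb := hGBmem e heS' heT
      rwa [hce] at hgb
    refine hutil_ge ℓ hℓ _ ?_ ?_
    · intro e hee
      exact Finset.mem_sdiff.2 ⟨Finset.mem_univ e, (hmemX e hee).2⟩
    · intro e hee
      exact (hmemX e hee).1
  have hdiag2 : ∀ ℓ : ℕ, ℓ ≤ β →
      ∑ S ∈ Sstar.powerset, lam S * (v i₀ (Xf S ℓ) - ∑ e ∈ Xf S ℓ, qbar e)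
        ≤ BSMutility v Dem N (rup ℓ) b β i₀ ℓ := by
    intro ℓ hℓ
    calc ∑ S ∈ Sstar.powerset, lam S * (v i₀ (Xf S ℓ) - ∑ e ∈ Xf S ℓ, qbar e)
        ≤ ∑ S ∈ Sstar.powerset, lam S * BSMutility v Dem N (rup ℓ) b β i₀ ℓ :=
          Finset.sum_le_sum fun S hS =>
            mul_le_mul_of_nonneg_left (hdiag ℓ hℓ S hS) (hlam0 S)
      _ = BSMutility v Dem N (rup ℓ) b β i₀ ℓ := by
          rw [← Finset.sum_mul, hlam1, one_mul]
  -- per-S inequality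
  have hperS : ∀ S ∈ Sstar.powerset,
      v i₀ (S \ Tstar) - priceOf q S
        ≤ ∑ ℓ ∈ Finset.range (β + 1), (v i₀ (Xf S ℓ) - ∑ e ∈ Xf S ℓ, qbar e) := by
    intro S hS
    have hSsub : S ⊆ Sstar := Finset.mem_powerset.1 hS
    have hbi : (Finset.range (β + 1)).biUnion (Xf S) = S \ Tstar := by
      ext e
      simp only [Finset.mem_biUnion, hXf', Finset.mem_filter, Finset.mem_range]
      constructor
      · rintro ⟨ℓ, _, he, _⟩
        exact he
      · intro he
        refine ⟨crit e, ?_, he, rfl⟩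
        have := (hcrit e (hSsub (Finset.mem_sdiff.1 he).1)).1
        omega
    have hb2 : v i₀ (S \ Tstar) ≤ ∑ ℓ ∈ Finset.range (β + 1), v i₀ (Xf S ℓ) := by
      rw [← hbi]
      exact subadd_biUnion (v i₀) h0 hsub (Xf S) (β + 1)
    have hb3 : ∑ ℓ ∈ Finset.range (β + 1), ∑ e ∈ Xf S ℓ, qbar e
        = ∑ e ∈ S \ Tstar, qbar e := by
      refine Finset.sum_fiberwise_of_maps_to ?_ qbar
      intro e he
      have := (hcrit e (hSsub (Finset.mem_sdiff.1 he).1)).1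
      exact Finset.mem_range.2 (by omega)
    have hb4 : ∑ e ∈ S \ Tstar, qbar e ≤ priceOf q S := by
      unfold priceOf
      calc ∑ e ∈ S \ Tstar, qbar e ≤ ∑ e ∈ S \ Tstar, q e := by
            refine Finset.sum_le_sum fun e he => ?_
            exact (hprops e (hSsub (Finset.mem_sdiff.1 he).1)).2.2.1
        _ ≤ ∑ e ∈ S, q e := by
            refine Finset.sum_le_sum_of_subset_of_nonneg
              (Finset.sdiff_subset) fun e heS _ => hq0 e (hSsub heS)
    rw [Finset.sum_sub_distrib, hb3]
    linarith
  -- total utility bound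
  have hutil_tot : 1 / α * v i₀ Sstar - priceOf q Tstar
      ≤ ∑ ℓ : Fin (β + 1), BSMutility v Dem N (rup (ℓ : ℕ)) b β i₀ (ℓ : ℕ) := by
    calc 1 / α * v i₀ Sstar - priceOf q Tstar
        ≤ ∑ S ∈ Sstar.powerset, lam S * (v i₀ (S \ Tstar) - priceOf q S) :=
          hkey Tstar hTsub
      _ ≤ ∑ S ∈ Sstar.powerset, lam S *
            (∑ ℓ ∈ Finset.range (β + 1), (v i₀ (Xf S ℓ) - ∑ e ∈ Xf S ℓ, qbar e)) :=
          Finset.sum_le_sum fun S hS =>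
            mul_le_mul_of_nonneg_left (hperS S hS) (hlam0 S)
      _ = ∑ ℓ ∈ Finset.range (β + 1), ∑ S ∈ Sstar.powerset,
            lam S * (v i₀ (Xf S ℓ) - ∑ e ∈ Xf S ℓ, qbar e) := by
          rw [Finset.sum_comm]
          exact Finset.sum_congr rfl fun S _ => Finset.mul_sum _ _ _
      _ ≤ ∑ ℓ ∈ Finset.range (β + 1), BSMutility v Dem N (rup ℓ) b β i₀ ℓ := by
          refine Finset.sum_le_sum fun ℓ hℓ => hdiag2 ℓ ?_
          have := Finset.mem_range.1 hℓ
          omega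
      _ = ∑ ℓ : Fin (β + 1), BSMutility v Dem N (rup (ℓ : ℕ)) b β i₀ (ℓ : ℕ) :=
          (Fin.sum_univ_eq_sum_range
            (fun ℓ => BSMutility v Dem N (rup ℓ) b β i₀ ℓ) (β + 1)).symm
  
  -- abbreviations
  set Qb := ∑ e ∈ Tstar, qbar e with hQb'
  have hQb0 : 0 ≤ Qb := Finset.sum_nonneg fun e he => (hprops e (hTsub he)).2.1
  have hvU0 : 0 ≤ v i₀ Sstar := by
    have := hmono ∅ Sstar (Finset.empty_subset _)
    linarith
  have hα0 : (0:ℝ) < α := lt_of_lt_of_le one_pos hα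
  set Utot := ∑ ℓ : Fin (β + 1), BSMutility v Dem N (rup (ℓ : ℕ)) b β i₀ (ℓ : ℕ) with hUtot'
  have hUtot0 : 0 ≤ Utot :=
    Finset.sum_nonneg fun ℓ _ => hutil_nn ℓ (ℓ : ℕ) (Fin.is_le ℓ)
  set Rtot := ∑ rs : Fin (β + 1), BSMrev Dem N (rup β) b β Sstar (rs : ℕ) with hRtot'
  have hA : Utot ≤ ∑ ri : Fin (β + 1), ∑ rs : Fin (β + 1),
      BSMutility v Dem N (rup (ri : ℕ)) b β i₀ (rs : ℕ) := by
    refine Finset.sum_le_sum fun ri _ => ?_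
    exact Finset.single_le_sum (f := fun rs : Fin (β + 1) =>
      BSMutility v Dem N (rup (ri : ℕ)) b β i₀ (rs : ℕ))
      (fun rs _ => hutil_nn ri (rs : ℕ) (Fin.is_le rs)) (Finset.mem_univ ri)
  have hB : Rtot ≤ ∑ ri : Fin (β + 1), ∑ rs : Fin (β + 1),
      BSMrev Dem N (rup (ri : ℕ)) b β Sstar (rs : ℕ) := by
    have h := Finset.single_le_sum (f := fun ri : Fin (β + 1) =>
      ∑ rs : Fin (β + 1), BSMrev Dem N (rup (ri : ℕ)) b β Sstar (rs : ℕ))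
      (fun ri _ => Finset.sum_nonneg fun rs _ => hrev_nn _ (rs : ℕ) (Fin.is_le rs))
      (Finset.mem_univ (Fin.last β))
    simp only [Fin.val_last] at h
    exact h
  have hbig : Utot + Rtot ≤ ∑ ri : Fin (β + 1), ∑ rs : Fin (β + 1),
      (BSMutility v Dem N (fun j => ((Function.update rminus i₀ ri) j : ℕ)) b β i₀ (rs : ℕ)
        + BSMrev Dem N
            (fun j => ((Function.update rminus i₀ ri) j : ℕ)) b β Sstar (rs : ℕ)) := by
    have hEq : (∑ ri : Fin (β + 1), ∑ rs : Fin (β + 1),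
        (BSMutility v Dem N (fun j => ((Function.update rminus i₀ ri) j : ℕ)) b β i₀ (rs : ℕ)
          + BSMrev Dem N
              (fun j => ((Function.update rminus i₀ ri) j : ℕ)) b β Sstar (rs : ℕ)))
        = (∑ ri : Fin (β + 1), ∑ rs : Fin (β + 1),
            BSMutility v Dem N (rup (ri : ℕ)) b β i₀ (rs : ℕ))
          + ∑ ri : Fin (β + 1), ∑ rs : Fin (β + 1),
              BSMrev Dem N (rup (ri : ℕ)) b β Sstar (rs : ℕ) := by
      simp only [hrup]
      calc (∑ ri : Fin (β + 1), ∑ rs : Fin (β + 1),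
          (BSMutility v Dem N (rup (ri : ℕ)) b β i₀ (rs : ℕ)
            + BSMrev Dem N (rup (ri : ℕ)) b β Sstar (rs : ℕ)))
          = ∑ ri : Fin (β + 1),
              ((∑ rs : Fin (β + 1), BSMutility v Dem N (rup (ri : ℕ)) b β i₀ (rs : ℕ))
                + ∑ rs : Fin (β + 1), BSMrev Dem N (rup (ri : ℕ)) b β Sstar (rs : ℕ)) :=
            Finset.sum_congr rfl fun ri _ => Finset.sum_add_distrib
        _ = _ := Finset.sum_add_distrib
    rw [hEq]
    exact add_le_add hA hB
  -- scalar bounds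
  have hmR : (2:ℝ) ≤ (m:ℝ) := by exact_mod_cast hm
  have hum : (m:ℝ) * (ψ / 2 ^ K) ≤ ψ / (m:ℝ) ^ 2 := by
    have h2K : ((m:ℝ)) ^ 3 ≤ (2:ℝ) ^ K := by exact_mod_cast hmK
    have hm3 : (0:ℝ) < (m:ℝ) ^ 3 := by positivity
    have h1 : ψ / 2 ^ K ≤ ψ / (m:ℝ) ^ 3 :=
      div_le_div_of_nonneg_left hψpos.le hm3 h2K
    have h2 : (m:ℝ) * (ψ / (m:ℝ) ^ 3) = ψ / (m:ℝ) ^ 2 := by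
      field_simp
    calc (m:ℝ) * (ψ / 2 ^ K) ≤ (m:ℝ) * (ψ / (m:ℝ) ^ 3) :=
        mul_le_mul_of_nonneg_left h1 (by linarith)
      _ = ψ / (m:ℝ) ^ 2 := h2
  have hSum : 1 / (2 * α) * v i₀ Sstar - ψ / (m:ℝ) ^ 2 ≤ Utot + Rtot := by
    by_cases hcase : 1 / (2 * α) * v i₀ Sstar ≤ Qb
    · have h1 : Qb ≤ Rtot := hrev_tot
      have h2 : (0:ℝ) ≤ ψ / (m:ℝ) ^ 2 := by positivity
      linarith
    · push_neg at hcase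
      have hnoexp : ∀ e ∈ Tstar, q e ≤ ψ := by
        by_contra hcon
        push_neg at hcon
        obtain ⟨e, heT, hgt⟩ := hcon
        have hqb : qbar e = 2 ^ (K - 1) * ψ / 2 ^ K :=
          (hprops e (hTsub heT)).2.2.2.2 hgt
        have hhalf : (2:ℝ) ^ (K - 1) * ψ / 2 ^ K = ψ / 2 := by
          have hKs : (2:ℝ) ^ K = 2 ^ (K - 1) * 2 := by
            rw [← pow_succ]
            congr 1
            omega
          have hp1 : (0:ℝ) < (2:ℝ) ^ (K - 1) := by positivity
          rw [hKs]
          field_simp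
        have hQbge : ψ / 2 ≤ Qb := by
          have h := Finset.single_le_sum (f := qbar)
            (fun e' he' => (hprops e' (hTsub he')).2.1) heT
          rw [hqb, hhalf] at h
          exact h
        have h6 : 1 / (2 * α) ≤ 1 / 2 := by
          rw [div_le_div_iff₀ (by linarith) (by norm_num)]
          linarith
        have h5 : 1 / (2 * α) * v i₀ Sstar ≤ ψ / 2 := by
          have h7 : 1 / (2 * α) * v i₀ Sstar ≤ 1 / 2 * v i₀ Sstar :=
            mul_le_mul_of_nonneg_right h6 hvU0
          linarith
        linarith
      have hqT : priceOf q Tstar ≤ 2 * Qb + (m:ℝ) * (ψ / 2 ^ K) := by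
        unfold priceOf
        calc ∑ e ∈ Tstar, q e ≤ ∑ e ∈ Tstar, (2 * qbar e + ψ / 2 ^ K) :=
            Finset.sum_le_sum fun e he =>
              (hprops e (hTsub he)).2.2.2.1 (hnoexp e he)
          _ = 2 * Qb + (Tstar.card : ℝ) * (ψ / 2 ^ K) := by
              rw [Finset.sum_add_distrib, Finset.sum_const, ← Finset.mul_sum]
              rw [nsmul_eq_mul, hQb']
          _ ≤ 2 * Qb + (m:ℝ) * (ψ / 2 ^ K) := by
              have hc : (Tstar.card : ℝ) ≤ (m:ℝ) := by
                have := Finset.card_le_univ Tstar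
                exact_mod_cast this
              have hpk : (0:ℝ) ≤ ψ / 2 ^ K := by positivity
              nlinarith
      have h1 := hutil_tot
      have h2 := hrev_tot
      have hid : 1 / (2 * α) * v i₀ Sstar + 1 / (2 * α) * v i₀ Sstar
          = 1 / α * v i₀ Sstar := by
        field_simp
        ring
      linarith
  -- final arithmetic
  have hC : (0:ℝ) < ((β:ℝ) + 1) ^ 2 := by positivity
  have hC1 : (1:ℝ) ≤ ((β:ℝ) + 1) ^ 2 := by nlinarith [Nat.cast_nonneg (α := ℝ) β]
  have hlast : 1 / (2 * α * ((β:ℝ) + 1) ^ 2) * v i₀ Sstar - ψ / (m:ℝ) ^ 2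
      ≤ (((β:ℝ) + 1) ^ 2)⁻¹ * (1 / (2 * α) * v i₀ Sstar - ψ / (m:ℝ) ^ 2) := by
    have hid2 : (((β:ℝ) + 1) ^ 2)⁻¹ * (1 / (2 * α) * v i₀ Sstar)
        = 1 / (2 * α * ((β:ℝ) + 1) ^ 2) * v i₀ Sstar := by
      rw [one_div, one_div, mul_inv, mul_inv]
      ring
    rw [mul_sub, hid2]
    have hψm : (0:ℝ) ≤ ψ / (m:ℝ) ^ 2 := by positivity
    have hCinv : (((β:ℝ) + 1) ^ 2)⁻¹ ≤ 1 := by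
      rw [inv_le_one_iff₀]
      right
      exact hC1
    nlinarith [mul_le_mul_of_nonneg_right hCinv hψm]
  rw [ge_iff_le]
  exact le_trans hlast
    (mul_le_mul_of_nonneg_left (le_trans hSum hbig) (inv_nonneg.2 hC.le))
end

section
/- With the definitions of C, O_ℓ, U_ℓ, D and T made from the run of BinarySearchMechanism(N \ {i}, M, ψ) with fixed rounds r_{−i}, the following holds in the actual mechanism BinarySearchMechanism(N, M, ψ) with bidder i included: E_{r*, r_i}[Rev(S_i*) | r_{−i}] ≥ (1/(β+1)²)·q(T), where Rev refers to the FixedPriceAuction that produced the final allocation and q(T) = Σ_{e∈T} q_e. -/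
open Finset

variable {ι : Type} [Fintype ι] [DecidableEq ι] {B : Type} [DecidableEq B]

open scoped Classical
set_option linter.unusedSectionVars false

/-- Item `e` is *oversold* at round `ℓ` (w.r.t. the intended prices `q`): it is allocated
in the round-`ℓ` fixed price auction although its round-`ℓ` price exceeds `q e`. -/
def OverAt (Dem : B → (ι → ℝ) → Finset ι → Finset ι) (N : List B) (r : B → ℕ)
    (b : ℕ → ℝ) (β : ℕ) (q : ι → ℝ) (ℓ : ℕ) (e : ι) : Prop :=
  e ∈ BSMsold Dem N r b β ℓ ∧ q e < BSMprice Dem N r b β ℓ e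

/-- Item `e` is *undersold* at round `ℓ`: it is not allocated in the round-`ℓ` fixed
price auction although its round-`ℓ` price is at most `q e`. -/
def UnderAt (Dem : B → (ι → ℝ) → Finset ι → Finset ι) (N : List B) (r : B → ℕ)
    (b : ℕ → ℝ) (β : ℕ) (q : ι → ℝ) (ℓ : ℕ) (e : ι) : Prop :=
  e ∉ BSMsold Dem N r b β ℓ ∧ BSMprice Dem N r b β ℓ e ≤ q e

/-- `O_ℓ`: the items of `Sstar` for which `ℓ` is the smallest round at which they are
allocated at a price exceeding their intended price. -/
noncomputable def Oset (Dem : B → (ι → ℝ) → Finset ι → Finset ι) (N : List B) (r : B → ℕ)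
    (b : ℕ → ℝ) (β : ℕ) (q : ι → ℝ) (Sstar : Finset ι) (ℓ : ℕ) : Finset ι :=
  Sstar.filter fun e =>
    OverAt Dem N r b β q ℓ e ∧ ∀ ℓ' < ℓ, ¬ OverAt Dem N r b β q ℓ' e

/-- `U_ℓ`: the items of `Sstar` for which `ℓ` is the smallest round at which they remain
unallocated at a price of at most their intended price. -/
noncomputable def Uset (Dem : B → (ι → ℝ) → Finset ι → Finset ι) (N : List B) (r : B → ℕ)
    (b : ℕ → ℝ) (β : ℕ) (q : ι → ℝ) (Sstar : Finset ι) (ℓ : ℕ) : Finset ι :=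
  Sstar.filter fun e =>
    UnderAt Dem N r b β q ℓ e ∧ ∀ ℓ' < ℓ, ¬ UnderAt Dem N r b β q ℓ' e

/-- `C`: the items of `Sstar` whose final (round `β`) price equals their intended price. -/
noncomputable def Cset (Dem : B → (ι → ℝ) → Finset ι → Finset ι) (N : List B) (r : B → ℕ)
    (b : ℕ → ℝ) (β : ℕ) (q : ι → ℝ) (Sstar : Finset ι) : Finset ι :=
  Sstar.filter fun e => BSMprice Dem N r b β β e = q e

/-- `D`: the items of `C` that, in the final-round fixed price auction, are allocated to
bidders satisfying `P` (the bidders preceding the distinguished bidder in the order of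
`N`; these form a prefix of the final group). -/
noncomputable def Dset (Dem : B → (ι → ℝ) → Finset ι → Finset ι) (N : List B) (r : B → ℕ)
    (b : ℕ → ℝ) (β : ℕ) (q : ι → ℝ) (Sstar : Finset ι) (P : B → Prop) : Finset ι :=
  (Cset Dem N r b β q Sstar).filter fun e =>
    e ∈ FPAsold (fun j => Dem j (BSMprice Dem N r b β β))
        ((BSMgroup N r β).filter fun j => P j) Finset.univ

/-- `T = O_1 ∪ ⋯ ∪ O_β ∪ D`. -/
noncomputable def Tset (Dem : B → (ι → ℝ) → Finset ι → Finset ι) (N : List B) (r : B → ℕ)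
    (b : ℕ → ℝ) (β : ℕ) (q : ι → ℝ) (Sstar : Finset ι) (P : B → Prop) : Finset ι :=
  (Finset.range β).biUnion (Oset Dem N r b β q Sstar) ∪ Dset Dem N r b β q Sstar P

section AuxClaim

variable {ι : Type} [Fintype ι] [DecidableEq ι] {B : Type} [DecidableEq B]

lemma FPAsold_prefix_subset (Dem : B → Finset ι → Finset ι) (L₁ L₂ : List B) (R : Finset ι) :
    FPAsold Dem L₁ R ⊆ FPAsold Dem (L₁ ++ L₂) R := by
  induction L₁ generalizing R with
  | nil => simp [FPAsold]
  | cons j L ih =>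
    simp only [List.cons_append, FPAsold]
    exact Finset.union_subset_union_right (ih _)

lemma filter_and_lt_prefix {α : Type} [LinearOrder α] (P : α → Bool) (c : α)
    (L : List α) (hL : L.Pairwise (· < ·)) :
    (L.filter fun j => P j && decide (j < c)) <+: L.filter P := by
  induction L with
  | nil => simp
  | cons x L ih =>
    rcases List.pairwise_cons.1 hL with ⟨hx, hL'⟩
    by_cases hc : x < c
    · by_cases hP : P x = true
      · obtain ⟨t, ht⟩ := ih hL'
        refine ⟨t, ?_⟩
        have hq : (P x && decide (x < c)) = true := by simp [hP, hc]
        simp [List.filter_cons, hq, hP, hc, ht]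
      · simpa [List.filter_cons, hP] using ih hL'
    · have hnil : (List.filter (fun j => P j && decide (j < c)) (x :: L)) = [] := by
        rw [List.filter_eq_nil_iff]
        intro a ha
        rcases List.mem_cons.1 ha with rfl | haL
        · simp [hc]
        · have : ¬ a < c := fun h => hc (lt_trans (hx a haL) h)
          simp [this]
      rw [hnil]
      exact List.nil_prefix

lemma BSMoff_add_le (Dem : B → (ι → ℝ) → Finset ι → Finset ι) (N : List B) (r : B → ℕ)
    (b : ℕ → ℝ) (β : ℕ) :
    ∀ ℓ, ℓ ≤ β → ∀ e : ι, BSMoff Dem N r b β ℓ e + 2 ^ (β - ℓ) ≤ 2 ^ β := by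
  intro ℓ
  induction ℓ with
  | zero => intro _ e; simp [BSMoff]
  | succ ℓ ih =>
    intro h e
    have ihe := ih (by omega) e
    have h2 : 2 ^ (β - ℓ) = 2 ^ (β - ℓ - 1) + 2 ^ (β - ℓ - 1) := by
      have hβℓ : β - ℓ = (β - ℓ - 1) + 1 := by omega
      conv_lhs => rw [hβℓ]
      rw [pow_succ]; omega
    have hsub : β - (ℓ + 1) = β - ℓ - 1 := by omega
    have hstep : BSMoff Dem N r b β (ℓ + 1) e ≤ BSMoff Dem N r b β ℓ e + 2 ^ (β - ℓ - 1) := by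
      simp only [BSMoff]
      split
      · exact Nat.le_refl _
      · exact Nat.le_add_right _ _
    rw [hsub]
    omega

lemma BSMprice_nonneg (Dem : B → (ι → ℝ) → Finset ι → Finset ι) (N : List B) (r : B → ℕ)
    (b : ℕ → ℝ) (β : ℕ) (hbnn : ∀ j < 2 ^ β, 0 ≤ b j) (ℓ : ℕ) (e : ι) :
    0 ≤ BSMprice Dem N r b β ℓ e := by
  unfold BSMprice
  split
  · next h =>
    apply hbnn
    have h1 := BSMoff_add_le Dem N r b β ℓ (le_of_lt h) e
    have h2 : 2 ^ (β - ℓ) = 2 ^ (β - ℓ - 1) + 2 ^ (β - ℓ - 1) := by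
      have hβℓ : β - ℓ = (β - ℓ - 1) + 1 := by omega
      conv_lhs => rw [hβℓ]
      rw [pow_succ]; omega
    have h3 : 0 < 2 ^ (β - ℓ - 1) := by positivity
    omega
  · apply hbnn
    have h1 := BSMoff_add_le Dem N r b β β le_rfl e
    simp only [Nat.sub_self, pow_zero] at h1
    omega

lemma BSMrev_nonneg (Dem : B → (ι → ℝ) → Finset ι → Finset ι) (N : List B) (r : B → ℕ)
    (b : ℕ → ℝ) (β : ℕ) (hbnn : ∀ j < 2 ^ β, 0 ≤ b j) (S : Finset ι) (ℓ : ℕ) :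
    0 ≤ BSMrev Dem N r b β S ℓ :=
  Finset.sum_nonneg fun e _ => BSMprice_nonneg Dem N r b β hbnn ℓ e

lemma priceOf_union_le (q : ι → ℝ) (A C : Finset ι) (h : ∀ e ∈ A ∩ C, 0 ≤ q e) :
    priceOf q (A ∪ C) ≤ priceOf q A + priceOf q C := by
  unfold priceOf
  have h1 := Finset.sum_union_inter (s₁ := A) (s₂ := C) (f := q)
  have h0 : 0 ≤ ∑ e ∈ A ∩ C, q e := Finset.sum_nonneg h
  linarith

lemma priceOf_biUnion_le (q : ι → ℝ) (f : ℕ → Finset ι) (k : ℕ)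
    (h : ∀ ℓ < k, ∀ e ∈ f ℓ, 0 ≤ q e) :
    priceOf q ((Finset.range k).biUnion f) ≤ ∑ ℓ ∈ Finset.range k, priceOf q (f ℓ) := by
  induction k with
  | zero => simp [priceOf]
  | succ k ih =>
    rw [Finset.range_add_one, Finset.biUnion_insert, Finset.sum_insert Finset.notMem_range_self]
    have step := priceOf_union_le q (f k) ((Finset.range k).biUnion f)
      (fun e he => h k (Nat.lt_succ_self k) e (Finset.mem_inter.1 he).1)
    have ihs := ih (fun ℓ hℓ => h ℓ (Nat.lt_succ_of_lt hℓ))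
    linarith

end AuxClaim

section MainClaim

variable {ι : Type} [Fintype ι] [DecidableEq ι] {n β : ℕ}

lemma BSM_group_eq (Dem : Fin n → (ι → ℝ) → Finset ι → Finset ι)
    (rminus : Fin n → Fin (β + 1)) (i₀ : Fin n) {ℓ : ℕ} (hℓ : ℓ ≠ β) :
    BSMgroup (List.finRange n)
        (fun j => ((Function.update rminus i₀ (Fin.last β)) j : ℕ)) ℓ
      = BSMgroup ((List.finRange n).filter fun j => j ≠ i₀)
          (fun j => (rminus j : ℕ)) ℓ := by
  unfold BSMgroup
  rw [List.filter_filter]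
  apply List.filter_congr
  intro j _
  by_cases hj : j = i₀
  · subst hj
    simp [Function.update_self, Fin.val_last, hℓ, Ne.symm hℓ]
  · simp [Function.update_of_ne hj, hj]

lemma BSM_off_eq (Dem : Fin n → (ι → ℝ) → Finset ι → Finset ι)
    (rminus : Fin n → Fin (β + 1)) (i₀ : Fin n) (b : ℕ → ℝ) :
    ∀ ℓ, ℓ ≤ β →
      BSMoff Dem (List.finRange n)
          (fun j => ((Function.update rminus i₀ (Fin.last β)) j : ℕ)) b β ℓ
        = BSMoff Dem ((List.finRange n).filter fun j => j ≠ i₀)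
            (fun j => (rminus j : ℕ)) b β ℓ := by
  intro ℓ
  induction ℓ with
  | zero => intro _; rfl
  | succ ℓ ih =>
    intro h
    have hg := BSM_group_eq Dem rminus i₀ (ℓ := ℓ) (by omega)
    have ho := ih (by omega)
    funext e
    show (if e ∈ FPAsold _ _ _ then _ else _) = (if e ∈ FPAsold _ _ _ then _ else _)
    rw [ho, hg]

lemma BSM_price_eq (Dem : Fin n → (ι → ℝ) → Finset ι → Finset ι)
    (rminus : Fin n → Fin (β + 1)) (i₀ : Fin n) (b : ℕ → ℝ) (ℓ : ℕ) :
    BSMprice Dem (List.finRange n)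
        (fun j => ((Function.update rminus i₀ (Fin.last β)) j : ℕ)) b β ℓ
      = BSMprice Dem ((List.finRange n).filter fun j => j ≠ i₀)
          (fun j => (rminus j : ℕ)) b β ℓ := by
  funext e
  unfold BSMprice
  split
  · next h => rw [BSM_off_eq Dem rminus i₀ b ℓ (le_of_lt h)]
  · rw [BSM_off_eq Dem rminus i₀ b β le_rfl]

lemma BSM_sold_eq (Dem : Fin n → (ι → ℝ) → Finset ι → Finset ι)
    (rminus : Fin n → Fin (β + 1)) (i₀ : Fin n) (b : ℕ → ℝ) {ℓ : ℕ} (hℓ : ℓ ≠ β) :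
    BSMsold Dem (List.finRange n)
        (fun j => ((Function.update rminus i₀ (Fin.last β)) j : ℕ)) b β ℓ
      = BSMsold Dem ((List.finRange n).filter fun j => j ≠ i₀)
          (fun j => (rminus j : ℕ)) b β ℓ := by
  unfold BSMsold
  rw [BSM_price_eq Dem rminus i₀ b ℓ, BSM_group_eq Dem rminus i₀ hℓ]

end MainClaim

/-- **Claim 4.2** (revenue lower bound).  Items are the elements of `ι` (`M = univ`);
bidders are `0, …, n-1` in this order with valuations `v i` and demand oracles `Dem i p`;
`b 0 < ⋯ < b (2^β - 1)` is the enlarged nonnegative candidate price set `B'`; `q e ∈ B'`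
are arbitrary intended prices for the items `e ∈ Sstar`.  The sets `C, O_ℓ, U_ℓ, D, T`
are defined from the run of `BinarySearchMechanism(N \ {i₀}, M, ψ)` with the fixed rounds
`rminus` (bidder list `(finRange n).filter (· ≠ i₀)`), `D` using the bidders preceding
`i₀`.  Then, in the actual mechanism (with bidder `i₀` included, i.e. with round
assignment `Function.update rminus i₀ ri`), the expectation over `r_{i₀}` and `r*` of the
revenue obtained from `Sstar` in the fixed price auction producing the final allocation
is at least `q(T)/(β+1)²`. -/
theorem claim_revenue_lower_bound
    {ι : Type} [Fintype ι] [DecidableEq ι] (n β : ℕ) (ψ : ℝ)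
    (v : Fin n → Finset ι → ℝ)
    (Dem : Fin n → (ι → ℝ) → Finset ι → Finset ι)
    (b : ℕ → ℝ) (q : ι → ℝ) (Sstar : Finset ι) (i₀ : Fin n)
    (rminus : Fin n → Fin (β + 1))
    (hm : 2 ≤ Fintype.card ι)
    (hval : ∀ i, IsValuation (v i))
    (hψpos : 0 < ψ)
    (hβ : 1 ≤ β)
    (hbmono : ∀ j k : ℕ, j < k → k < 2 ^ β → b j < b k)
    (hbnn : ∀ j < 2 ^ β, 0 ≤ b j)
    (hbB : ∀ x ∈ candB (Fintype.card ι) ψ, ∃ j < 2 ^ β, b j = x)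
    (hq : ∀ e ∈ Sstar, ∃ j < 2 ^ β, b j = q e)
    (hDem : ∀ i p, IsDemandOracle (v i) p (Dem i p)) :
    (((β : ℝ) + 1) ^ 2)⁻¹ *
        ∑ ri : Fin (β + 1), ∑ rs : Fin (β + 1),
          BSMrev Dem (List.finRange n)
            (fun j => ((Function.update rminus i₀ ri) j : ℕ)) b β Sstar (rs : ℕ)
      ≥ (((β : ℝ) + 1) ^ 2)⁻¹ *
          priceOf q (Tset Dem ((List.finRange n).filter fun j => j ≠ i₀)
            (fun j => (rminus j : ℕ)) b β q Sstar (fun j => j < i₀)) := by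
  rw [ge_iff_le]
  apply mul_le_mul_of_nonneg_left _ (by positivity)
  -- notation
  set N : List (Fin n) := List.finRange n with hN
  set Nm : List (Fin n) := (List.finRange n).filter fun j => j ≠ i₀ with hNm
  set rm : Fin n → ℕ := fun j => (rminus j : ℕ) with hrm
  set rb : Fin n → ℕ := fun j => ((Function.update rminus i₀ (Fin.last β)) j : ℕ) with hrb
  have hq0 : ∀ e ∈ Sstar, 0 ≤ q e := by
    intro e he
    obtain ⟨j, hj, hbj⟩ := hq e he
    rw [← hbj]; exact hbnn j hj
  have hpnn : ∀ ℓ (e : ι), 0 ≤ BSMprice Dem N rb b β ℓ e :=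
    fun ℓ e => BSMprice_nonneg Dem N rb b β hbnn ℓ e
  have hOsub : ∀ ℓ, Oset Dem Nm rm b β q Sstar ℓ ⊆ Sstar := by
    intro ℓ e he
    exact (Finset.mem_filter.1 he).1
  have hDsub : Dset Dem Nm rm b β q Sstar (fun j => j < i₀) ⊆ Sstar := by
    intro e he
    exact (Finset.mem_filter.1 (Finset.mem_filter.1 he).1).1
  -- Step 1 : bound the double sum from below by the `ri = last` term
  have hrev_nn : ∀ ri rs : Fin (β + 1),
      0 ≤ BSMrev Dem N (fun j => ((Function.update rminus i₀ ri) j : ℕ)) b β Sstar (rs : ℕ) :=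
    fun ri rs => BSMrev_nonneg _ _ _ _ _ hbnn _ _
  have hsingle : ∑ rs : Fin (β + 1), BSMrev Dem N rb b β Sstar (rs : ℕ) ≤
      ∑ ri : Fin (β + 1), ∑ rs : Fin (β + 1),
        BSMrev Dem N (fun j => ((Function.update rminus i₀ ri) j : ℕ)) b β Sstar (rs : ℕ) :=
    Finset.single_le_sum
      (f := fun ri => ∑ rs : Fin (β + 1),
        BSMrev Dem N (fun j => ((Function.update rminus i₀ ri) j : ℕ)) b β Sstar (rs : ℕ))
      (fun i _ => Finset.sum_nonneg fun rs _ => hrev_nn i rs) (Finset.mem_univ (Fin.last β))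
  rw [Fin.sum_univ_eq_sum_range (fun ℓ => BSMrev Dem N rb b β Sstar ℓ),
    Finset.sum_range_succ] at hsingle
  -- Step 2 : per-round bounds
  have hOℓ : ∀ ℓ < β, priceOf q (Oset Dem Nm rm b β q Sstar ℓ) ≤
      BSMrev Dem N rb b β Sstar ℓ := by
    intro ℓ hℓ
    have hpr : BSMprice Dem N rb b β ℓ = BSMprice Dem Nm rm b β ℓ :=
      BSM_price_eq Dem rminus i₀ b ℓ
    have hsold : BSMsold Dem N rb b β ℓ = BSMsold Dem Nm rm b β ℓ :=
      BSM_sold_eq Dem rminus i₀ b (Nat.ne_of_lt hℓ)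
    have hover : ∀ e ∈ Oset Dem Nm rm b β q Sstar ℓ, OverAt Dem Nm rm b β q ℓ e := by
      intro e he
      exact (Finset.mem_filter.1 he).2.1
    have step1 : priceOf q (Oset Dem Nm rm b β q Sstar ℓ) ≤
        priceOf (BSMprice Dem N rb b β ℓ) (Oset Dem Nm rm b β q Sstar ℓ) := by
      unfold priceOf
      apply Finset.sum_le_sum
      intro e he
      rw [hpr]
      exact le_of_lt (hover e he).2
    have step2 : priceOf (BSMprice Dem N rb b β ℓ) (Oset Dem Nm rm b β q Sstar ℓ) ≤
        BSMrev Dem N rb b β Sstar ℓ := by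
      unfold BSMrev priceOf
      apply Finset.sum_le_sum_of_subset_of_nonneg
      · intro e he
        refine Finset.mem_inter.2 ⟨hOsub ℓ he, ?_⟩
        rw [hsold]
        exact (hover e he).1
      · intro e _ _
        exact hpnn ℓ e
    linarith
  -- Step 3 : the final-round bound
  have hD : priceOf q (Dset Dem Nm rm b β q Sstar (fun j => j < i₀)) ≤
      BSMrev Dem N rb b β Sstar β := by
    have hprβ : BSMprice Dem N rb b β β = BSMprice Dem Nm rm b β β :=
      BSM_price_eq Dem rminus i₀ b β
    -- the prefix property of the final group
    have hgrp : ((BSMgroup Nm rm β).filter fun j => j < i₀)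
        = N.filter fun j => decide (rb j = β) && decide (j < i₀) := by
      show ((List.filter _ (List.filter _ N)).filter _) = _
      rw [List.filter_filter, List.filter_filter]
      apply List.filter_congr
      intro j _
      by_cases hj : j < i₀
      · have hne : j ≠ i₀ := ne_of_lt hj
        simp [hj, hne, hrb, hrm, Function.update_of_ne hne]
      · simp [hj]
    have hpref : ((BSMgroup Nm rm β).filter fun j => j < i₀) <+: BSMgroup N rb β := by
      rw [hgrp]
      exact filter_and_lt_prefix (fun j => decide (rb j = β)) i₀ N (List.pairwise_lt_finRange n)
    obtain ⟨L₂, hL₂⟩ := hpref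
    have hDsold : ∀ e ∈ Dset Dem Nm rm b β q Sstar (fun j => j < i₀),
        e ∈ BSMsold Dem N rb b β β := by
      intro e he
      have h2 := (Finset.mem_filter.1 he).2
      have h2' : e ∈ FPAsold (fun j => Dem j (BSMprice Dem Nm rm b β β))
          ((BSMgroup Nm rm β).filter fun j => decide (j < i₀)) Finset.univ := by
        convert h2 using 3
        funext j
        exact decide_eq_decide.2 Iff.rfl
      unfold BSMsold
      rw [hprβ, ← hL₂]
      exact FPAsold_prefix_subset _ _ _ _ h2'
    have hqD : ∀ e ∈ Dset Dem Nm rm b β q Sstar (fun j => j < i₀),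
        q e = BSMprice Dem N rb b β β e := by
      intro e he
      have hC := (Finset.mem_filter.1 (Finset.mem_filter.1 he).1).2
      rw [hprβ]
      exact hC.symm
    unfold BSMrev priceOf
    calc ∑ e ∈ Dset Dem Nm rm b β q Sstar (fun j => j < i₀), q e
        = ∑ e ∈ Dset Dem Nm rm b β q Sstar (fun j => j < i₀),
            BSMprice Dem N rb b β β e := Finset.sum_congr rfl hqD
      _ ≤ ∑ e ∈ Sstar ∩ BSMsold Dem N rb b β β, BSMprice Dem N rb b β β e := by
          apply Finset.sum_le_sum_of_subset_of_nonneg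
          · intro e he
            exact Finset.mem_inter.2 ⟨hDsub he, hDsold e he⟩
          · intro e _ _
            exact hpnn β e
  -- Step 4 : subadditivity of `q` over `T`
  have hT : priceOf q (Tset Dem Nm rm b β q Sstar (fun j => j < i₀)) ≤
      (∑ ℓ ∈ Finset.range β, priceOf q (Oset Dem Nm rm b β q Sstar ℓ)) +
        priceOf q (Dset Dem Nm rm b β q Sstar (fun j => j < i₀)) := by
    unfold Tset
    have h1 := priceOf_union_le q ((Finset.range β).biUnion (Oset Dem Nm rm b β q Sstar))
      (Dset Dem Nm rm b β q Sstar (fun j => j < i₀))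
      (fun e he => hq0 e (hDsub (Finset.mem_inter.1 he).2))
    have h2 := priceOf_biUnion_le q (Oset Dem Nm rm b β q Sstar) β
      (fun ℓ _ e he => hq0 e (hOsub ℓ he))
    linarith
  have hsum : ∑ ℓ ∈ Finset.range β, priceOf q (Oset Dem Nm rm b β q Sstar ℓ) ≤
      ∑ ℓ ∈ Finset.range β, BSMrev Dem N rb b β Sstar ℓ :=
    Finset.sum_le_sum fun ℓ hℓ => hOℓ ℓ (Finset.mem_range.1 hℓ)
  linarith
end

section
/- Let β ≥ 1 be an integer, b_1 < b_2 < … < b_{2^β} strictly increasing reals, and E_1, …, E_β Boolean values. Define index blocks recursively: I_1 = {1, …, 2^β}; given that I_ℓ is a block of k = 2^{β−ℓ+1} consecutive indices, let p^{(ℓ)} = b_j where j is the (k/2+1)-st smallest index of I_ℓ, and let I_{ℓ+1} be the upper half of I_ℓ (its k/2 largest indices) if E_ℓ is true and the lower half (its k/2 smallest indices) otherwise; let p^{(β+1)} = b_j for the unique index j of I_{β+1}. Then for every index j ∈ {1, …, 2^β}, exactly one of the following holds: (i) p^{(β+1)} = b_j; (ii) there is a round ℓ ∈ {1, …, β} with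 j ∈ I_ℓ, E_ℓ true and p^{(ℓ)} > b_j, and in this case p^{(β+1)} > b_j; (iii) there is a round ℓ ∈ {1, …, β} with j ∈ I_ℓ, E_ℓ false and p^{(ℓ)} ≤ b_j, and in this case p^{(β+1)} < b_j. -/
/-- The offset (smallest index, `0`-indexed) of the block `I_ℓ` of remaining indices of a
binary search over `2^β` sorted values: start with the full range; in round `ℓ`
(`0`-indexed, `ℓ = 0, …, β-1`) keep the upper half if `E ℓ` is true and the lower half
otherwise.  The block at stage `ℓ` is `{bsOff E β ℓ, …, bsOff E β ℓ + 2^(β-ℓ) - 1}`. -/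
def bsOff (E : ℕ → Bool) (β : ℕ) : ℕ → ℕ
  | 0 => 0
  | ℓ + 1 => bsOff E β ℓ + if E ℓ then 2 ^ (β - ℓ - 1) else 0

lemma bsOff_step (E : ℕ → Bool) (β ℓ : ℕ) (h : ℓ < β) :
    bsOff E β ℓ ≤ bsOff E β (ℓ+1) ∧
    bsOff E β (ℓ+1) + 2 ^ (β - (ℓ+1)) ≤ bsOff E β ℓ + 2 ^ (β - ℓ) := by
  have h2 : 2 ^ (β - ℓ) = 2 ^ (β - (ℓ + 1)) + 2 ^ (β - (ℓ + 1)) := by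
    have : 2 ^ (β - (ℓ + 1)) * 2 = 2 ^ (β - ℓ) := by
      rw [← pow_succ]; congr 1; omega
    omega
  have hp : 0 < 2 ^ (β - (ℓ + 1)) := Nat.pow_pos (by norm_num)
  rw [show bsOff E β (ℓ+1) = bsOff E β ℓ + if E ℓ then 2 ^ (β - ℓ - 1) else 0 from rfl]
  cases E ℓ <;> simp [Nat.sub_sub] <;> omega

lemma bsOff_chain (E : ℕ → Bool) (β : ℕ) :
    ∀ m ≤ β, ∀ ℓ ≤ m, bsOff E β ℓ ≤ bsOff E β m ∧
      bsOff E β m + 2 ^ (β - m) ≤ bsOff E β ℓ + 2 ^ (β - ℓ) := by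
  intro m
  induction m with
  | zero => intro _ ℓ hℓ; interval_cases ℓ; omega
  | succ n ih =>
    intro hn ℓ hℓ
    have hs := bsOff_step E β n (by omega)
    rcases Nat.lt_or_ge ℓ (n+1) with h | h
    · have := ih (by omega) ℓ (by omega)
      constructor <;> omega
    · have : ℓ = n + 1 := by omega
      subst this; omega

/-- **The binary-search price-elimination invariant.**  Let `b 0 < b 1 < ⋯ < b (2^β - 1)`
be strictly increasing reals (the candidate prices, `0`-indexed) and `E 0, …, E (β-1)`
Boolean values.  In round `ℓ` the middle price is `p^{(ℓ)} = b (bsOff E β ℓ + 2^(β-ℓ-1))`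
(the `(k/2+1)`-st entry of the current block of length `k = 2^(β-ℓ)`), and the final
price is `p^{(β+1)} = b (bsOff E β β)`.  Then for every index `j < 2^β` exactly one of
the following holds: (i) `p^{(β+1)} = b j`; (ii) there is a round `ℓ < β` with `j` in the
block `I_ℓ`, `E ℓ` true and `p^{(ℓ)} > b j` — and then `p^{(β+1)} > b j`; (iii) there is
a round `ℓ < β` with `j` in the block `I_ℓ`, `E ℓ` false and `p^{(ℓ)} ≤ b j` — and then
`p^{(β+1)} < b j`. -/
theorem binary_search_trichotomy (β : ℕ) (hβ : 1 ≤ β) (b : ℕ → ℝ)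
    (hb : ∀ j k : ℕ, j < k → k < 2 ^ β → b j < b k) (E : ℕ → Bool) :
    ∀ j < 2 ^ β,
      ((b (bsOff E β β) = b j) ∧
        ¬(∃ ℓ < β, (bsOff E β ℓ ≤ j ∧ j < bsOff E β ℓ + 2 ^ (β - ℓ)) ∧
            E ℓ = true ∧ b j < b (bsOff E β ℓ + 2 ^ (β - ℓ - 1))) ∧
        ¬(∃ ℓ < β, (bsOff E β ℓ ≤ j ∧ j < bsOff E β ℓ + 2 ^ (β - ℓ)) ∧
            E ℓ = false ∧ b (bsOff E β ℓ + 2 ^ (β - ℓ - 1)) ≤ b j)) ∨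
      (¬(b (bsOff E β β) = b j) ∧
        (∃ ℓ < β, (bsOff E β ℓ ≤ j ∧ j < bsOff E β ℓ + 2 ^ (β - ℓ)) ∧
            E ℓ = true ∧ b j < b (bsOff E β ℓ + 2 ^ (β - ℓ - 1))) ∧
        ¬(∃ ℓ < β, (bsOff E β ℓ ≤ j ∧ j < bsOff E β ℓ + 2 ^ (β - ℓ)) ∧
            E ℓ = false ∧ b (bsOff E β ℓ + 2 ^ (β - ℓ - 1)) ≤ b j) ∧
        b j < b (bsOff E β β)) ∨
      (¬(b (bsOff E β β) = b j) ∧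
        ¬(∃ ℓ < β, (bsOff E β ℓ ≤ j ∧ j < bsOff E β ℓ + 2 ^ (β - ℓ)) ∧
            E ℓ = true ∧ b j < b (bsOff E β ℓ + 2 ^ (β - ℓ - 1))) ∧
        (∃ ℓ < β, (bsOff E β ℓ ≤ j ∧ j < bsOff E β ℓ + 2 ^ (β - ℓ)) ∧
            E ℓ = false ∧ b (bsOff E β ℓ + 2 ^ (β - ℓ - 1)) ≤ b j) ∧
        b (bsOff E β β) < b j) := by
  intro j hj
  set f := bsOff E β β with hfdef
  -- every block lies in range
  have hrange : ∀ ℓ ≤ β, bsOff E β ℓ + 2 ^ (β - ℓ) ≤ 2 ^ β := by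
    intro ℓ hℓ
    have := (bsOff_chain E β ℓ hℓ 0 (Nat.zero_le _)).2
    simpa [bsOff] using this
  have hfb : f + 1 ≤ 2 ^ β := by
    have := hrange β le_rfl
    simpa using this
  have hf : f < 2 ^ β := by omega
  -- strict monotonicity both ways
  have hmono : ∀ x y : ℕ, x < 2 ^ β → y < 2 ^ β → (b x < b y ↔ x < y) := by
    intro x y hx hy
    constructor
    · intro h
      by_contra hxy
      push_neg at hxy
      rcases Nat.lt_or_ge y x with h' | h'
      · exact absurd (hb y x h' hx) (by linarith)
      · have : y = x := by omega
        subst this; linarith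
    · intro h; exact hb x y h hy
  -- condition (ii) at some round implies j < f
  have key_ii : (∃ ℓ < β, (bsOff E β ℓ ≤ j ∧ j < bsOff E β ℓ + 2 ^ (β - ℓ)) ∧
      E ℓ = true ∧ b j < b (bsOff E β ℓ + 2 ^ (β - ℓ - 1))) → j < f := by
    rintro ⟨ℓ, hℓ, ⟨h1, h2⟩, hE, hlt⟩
    have hmid : bsOff E β ℓ + 2 ^ (β - ℓ - 1) < 2 ^ β := by
      have hr := hrange ℓ (le_of_lt hℓ)
      have : 2 ^ (β - ℓ - 1) < 2 ^ (β - ℓ) :=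
        Nat.pow_lt_pow_right (by norm_num) (by omega)
      omega
    have hjm : j < bsOff E β ℓ + 2 ^ (β - ℓ - 1) := (hmono _ _ hj hmid).1 hlt
    have hsucc : bsOff E β (ℓ+1) = bsOff E β ℓ + 2 ^ (β - ℓ - 1) := by
      rw [show bsOff E β (ℓ+1) = bsOff E β ℓ + if E ℓ then 2 ^ (β - ℓ - 1) else 0 from rfl, hE]
      simp
    have := (bsOff_chain E β β le_rfl (ℓ+1) (by omega)).1
    omega
  -- condition (iii) at some round implies f < j
  have key_iii : (∃ ℓ < β, (bsOff E β ℓ ≤ j ∧ j < bsOff E β ℓ + 2 ^ (β - ℓ)) ∧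
      E ℓ = false ∧ b (bsOff E β ℓ + 2 ^ (β - ℓ - 1)) ≤ b j) → f < j := by
    rintro ⟨ℓ, hℓ, ⟨h1, h2⟩, hE, hle⟩
    have hmid : bsOff E β ℓ + 2 ^ (β - ℓ - 1) < 2 ^ β := by
      have hr := hrange ℓ (le_of_lt hℓ)
      have : 2 ^ (β - ℓ - 1) < 2 ^ (β - ℓ) :=
        Nat.pow_lt_pow_right (by norm_num) (by omega)
      omega
    have hjm : bsOff E β ℓ + 2 ^ (β - ℓ - 1) ≤ j := by
      by_contra hc
      push_neg at hc
      exact absurd ((hmono _ _ hj hmid).2 hc) (by linarith)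
    have hsucc : bsOff E β (ℓ+1) = bsOff E β ℓ := by
      rw [show bsOff E β (ℓ+1) = bsOff E β ℓ + if E ℓ then 2 ^ (β - ℓ - 1) else 0 from rfl, hE]
      simp
    have hch := (bsOff_chain E β β le_rfl (ℓ+1) (by omega)).2
    have hd : β - (ℓ+1) = β - ℓ - 1 := by omega
    rw [hd, hsucc] at hch
    simp only [Nat.sub_self, pow_zero] at hch
    omega
  -- if j ≠ f then condition (ii) or (iii) holds at the exit round
  have exit : j ≠ f →
      (∃ ℓ < β, (bsOff E β ℓ ≤ j ∧ j < bsOff E β ℓ + 2 ^ (β - ℓ)) ∧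
          E ℓ = true ∧ b j < b (bsOff E β ℓ + 2 ^ (β - ℓ - 1))) ∨
      (∃ ℓ < β, (bsOff E β ℓ ≤ j ∧ j < bsOff E β ℓ + 2 ^ (β - ℓ)) ∧
          E ℓ = false ∧ b (bsOff E β ℓ + 2 ^ (β - ℓ - 1)) ≤ b j) := by
    intro hne
    have hex : ∃ ℓ < β, (bsOff E β ℓ ≤ j ∧ j < bsOff E β ℓ + 2 ^ (β - ℓ)) ∧
        ¬(bsOff E β (ℓ+1) ≤ j ∧ j < bsOff E β (ℓ+1) + 2 ^ (β - (ℓ+1))) := by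
      by_contra hc
      push_neg at hc
      have hin : ∀ m ≤ β, bsOff E β m ≤ j ∧ j < bsOff E β m + 2 ^ (β - m) := by
        intro m
        induction m with
        | zero => intro _; simp [bsOff]; omega
        | succ n ih =>
          intro h
          exact hc n (by omega) (ih (by omega))
      have := hin β le_rfl
      simp only [Nat.sub_self, pow_zero] at this
      omega
    obtain ⟨ℓ, hℓ, ⟨h1, h2⟩, hnot⟩ := hex
    have h2' : 2 ^ (β - ℓ) = 2 ^ (β - (ℓ + 1)) + 2 ^ (β - (ℓ + 1)) := by
      have : 2 ^ (β - (ℓ + 1)) * 2 = 2 ^ (β - ℓ) := by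
        rw [← pow_succ]; congr 1; omega
      omega
    have hd : β - (ℓ+1) = β - ℓ - 1 := by omega
    rw [hd] at h2'
    have hp : 0 < 2 ^ (β - ℓ - 1) := Nat.pow_pos (by norm_num)
    have hmid : bsOff E β ℓ + 2 ^ (β - ℓ - 1) < 2 ^ β := by
      have hr := hrange ℓ (le_of_lt hℓ)
      omega
    cases hE : E ℓ with
    | true =>
      left
      refine ⟨ℓ, hℓ, ⟨h1, h2⟩, hE, ?_⟩
      have hsucc : bsOff E β (ℓ+1) = bsOff E β ℓ + 2 ^ (β - ℓ - 1) := by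
        rw [show bsOff E β (ℓ+1) = bsOff E β ℓ + if E ℓ then 2 ^ (β - ℓ - 1) else 0 from rfl, hE]
        simp
      rw [hsucc, hd] at hnot
      push_neg at hnot
      have hjm : j < bsOff E β ℓ + 2 ^ (β - ℓ - 1) := by
        by_contra hc
        push_neg at hc
        exact absurd (hnot hc) (by omega)
      exact hb j _ hjm hmid
    | false =>
      right
      refine ⟨ℓ, hℓ, ⟨h1, h2⟩, hE, ?_⟩
      have hsucc : bsOff E β (ℓ+1) = bsOff E β ℓ := by
        rw [show bsOff E β (ℓ+1) = bsOff E β ℓ + if E ℓ then 2 ^ (β - ℓ - 1) else 0 from rfl, hE]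
        simp
      rw [hsucc, hd] at hnot
      push_neg at hnot
      have hjm : bsOff E β ℓ + 2 ^ (β - ℓ - 1) ≤ j := hnot h1
      rcases Nat.eq_or_lt_of_le hjm with h | h
      · rw [h]
      · exact le_of_lt (hb _ j h hj)
  -- assemble trichotomy
  rcases lt_trichotomy j f with h | h | h
  · right; left
    have hPQ := exit (by omega)
    have hP : ∃ ℓ < β, (bsOff E β ℓ ≤ j ∧ j < bsOff E β ℓ + 2 ^ (β - ℓ)) ∧
        E ℓ = true ∧ b j < b (bsOff E β ℓ + 2 ^ (β - ℓ - 1)) := by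
      rcases hPQ with hP | hQ
      · exact hP
      · exact absurd (key_iii hQ) (by omega)
    refine ⟨?_, hP, fun hQ => absurd (key_iii hQ) (by omega), hb j f h hf⟩
    intro heq
    exact absurd (hb j f h hf) (by rw [heq]; exact lt_irrefl _)
  · left
    refine ⟨by rw [h], fun hP => absurd (key_ii hP) (by omega),
      fun hQ => absurd (key_iii hQ) (by omega)⟩
  · right; right
    have hPQ := exit (by omega)
    have hQ : ∃ ℓ < β, (bsOff E β ℓ ≤ j ∧ j < bsOff E β ℓ + 2 ^ (β - ℓ)) ∧
        E ℓ = false ∧ b (bsOff E β ℓ + 2 ^ (β - ℓ - 1)) ≤ b j := by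
      rcases hPQ with hP | hQ
      · exact absurd (key_ii hP) (by omega)
      · exact hQ
    refine ⟨?_, fun hP => absurd (key_ii hP) (by omega), hQ, hb f j h hj⟩
    intro heq
    exact absurd (hb f j h hj) (by rw [heq]; exact lt_irrefl _)
end

section
/- Fix a finite set M of items, a price vector p, and for each bidder a valuation v_i and a fixed deterministic demand oracle D_i. Let L₁ and L₂ be lists of bidders and let i be a bidder not occurring in L₁ or L₂. Let X be the set of items of M that are not allocated in FixedPriceAuction(L₁ ++ L₂, M, p). Then in FixedPriceAuction(L₁ ++ [i] ++ L₂, M, p), every item of X is still available when bidder i is processed, and consequently bidder i's utility satisfies v_i(A_i) − p(A_i) ≥ v_i(T) − p(T) for every T ⊆ X, where A_i is the bundle bidder i receives. -/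
open Finset

variable {ι : Type} [Fintype ι] [DecidableEq ι] {B : Type} [DecidableEq B]

lemma FPAsold_append_subset (Dem : B → Finset ι → Finset ι) (L₁ L₂ : List B) :
    ∀ R : Finset ι, FPAsold Dem L₁ R ⊆ FPAsold Dem (L₁ ++ L₂) R := by
  induction L₁ with
  | nil => intro R; simp [FPAsold]
  | cons j L ih =>
    intro R
    simp only [List.cons_append, FPAsold]
    exact Finset.union_subset_union subset_rfl (ih _)

lemma FPAalloc_append (Dem : B → Finset ι → Finset ι) (i : B) (L₁ L : List B)
    (hi : i ∉ L₁) : ∀ R : Finset ι,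
    FPAalloc Dem (L₁ ++ L) R i = FPAalloc Dem L (R \ FPAsold Dem L₁ R) i := by
  induction L₁ with
  | nil => intro R; simp [FPAsold]
  | cons j L₁' ih =>
    intro R
    have hij : i ≠ j := fun h => hi (by simp [h])
    have hi' : i ∉ L₁' := fun h => hi (List.mem_cons_of_mem _ h)
    simp only [List.cons_append, FPAalloc, FPAsold, if_neg hij, ih hi']
    have hset : (R \ Dem j R) \ FPAsold Dem L₁' (R \ Dem j R)
        = R \ (Dem j R ∪ FPAsold Dem L₁' (R \ Dem j R)) := by
      ext x; simp only [Finset.mem_sdiff, Finset.mem_union]; tauto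
    rw [hset]

/-- **Insertion property of the fixed price auction.**  Items are the elements of `ι`
(`M = univ`); prices `p`, valuations `v j` and demand oracles `Dem j` are fixed.  Let
`L₁, L₂` be lists of bidders and `i` a bidder not occurring in `L₁` or `L₂`, and let `X`
be the set of items not allocated in `FixedPriceAuction(L₁ ++ L₂, M, p)`.  Then in
`FixedPriceAuction(L₁ ++ [i] ++ L₂, M, p)` every item of `X` is still available when
bidder `i` is processed (the available set is `univ \ FPAsold Dem L₁ univ`), and
consequently bidder `i`'s bundle `A_i` satisfies `v_i(A_i) − p(A_i) ≥ v_i(T) − p(T)` for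
every `T ⊆ X`. -/
theorem fixedPriceAuction_insert_bidder
    {ι : Type} [Fintype ι] [DecidableEq ι] {B : Type} [DecidableEq B]
    (p : ι → ℝ) (v : B → Finset ι → ℝ) (Dem : B → Finset ι → Finset ι)
    (hp : ∀ e, 0 ≤ p e)
    (hval : ∀ j, IsValuation (v j))
    (hDem : ∀ j, IsDemandOracle (v j) p (Dem j))
    (L₁ L₂ : List B) (i : B) (hi₁ : i ∉ L₁) (hi₂ : i ∉ L₂) :
    Finset.univ \ FPAsold Dem (L₁ ++ L₂) Finset.univ ⊆
        Finset.univ \ FPAsold Dem L₁ Finset.univ ∧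
    ∀ T ⊆ Finset.univ \ FPAsold Dem (L₁ ++ L₂) Finset.univ,
      v i T - priceOf p T ≤
        v i (FPAalloc Dem (L₁ ++ i :: L₂) Finset.univ i)
          - priceOf p (FPAalloc Dem (L₁ ++ i :: L₂) Finset.univ i) := by
  have hsub : Finset.univ \ FPAsold Dem (L₁ ++ L₂) Finset.univ ⊆
      Finset.univ \ FPAsold Dem L₁ Finset.univ :=
    Finset.sdiff_subset_sdiff subset_rfl (FPAsold_append_subset Dem L₁ L₂ Finset.univ)
  refine ⟨hsub, fun T hT => ?_⟩
  have halloc : FPAalloc Dem (L₁ ++ i :: L₂) Finset.univ i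
      = Dem i (Finset.univ \ FPAsold Dem L₁ Finset.univ) := by
    rw [FPAalloc_append Dem i L₁ (i :: L₂) hi₁]
    simp [FPAalloc]
  rw [halloc]
  exact (hDem i _).2 T (hT.trans hsub)
end
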